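/- Let δ ∈ ℝ∪{∞}. On 𝒱(•,δ), the subspace topology induced by the Zariski topology of Zar(K(X)|V), the subspace topology induced by the constructible topology, and the metric topology induced by d_δ all coincide. -/

import Mathlib

open Filter Topology TopologicalSpace Set Polynomial

noncomputable section

namespace PaperPCZar

variable {K : Type*} [Field K]

/-- `expNeg γ = e^{-γ}` for `γ ∈ ℝ ∪ {∞}`, with `e^{-∞} = 0`. -/
def expNeg (γ : WithTop ℝ) : ℝ := WithTop.recTopCoe 0 (fun r => Real.exp (-r)) γ

/-- `v` is a rank-one (i.e. nontrivial, real-valued) valuation. -/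
def IsRankOne (v : AddValuation K (WithTop ℝ)) : Prop := ∃ x : K, v x ≠ 0 ∧ v x ≠ ⊤

/-- The value group `Γ_v` of `v`, as a subset of `ℝ`. -/
def valueGroup (v : AddValuation K (WithTop ℝ)) : Set ℝ := {r : ℝ | ∃ x : K, v x = (r : WithTop ℝ)}

/-- `ℚΓ_v = {q·γ : q ∈ ℚ, γ ∈ Γ_v}`, the divisible hull of the value group inside `ℝ`. -/
def QGamma (v : AddValuation K (WithTop ℝ)) : Set ℝ :=
  {r : ℝ | ∃ (q : ℚ) (γ : ℝ), γ ∈ valueGroup v ∧ r = q * γ}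

/-- Order convergence of a sequence in `ℝ ∪ {∞}` to `γ`. -/
def OrdLim (f : ℕ → WithTop ℝ) (γ : WithTop ℝ) : Prop :=
  (∀ a : WithTop ℝ, a < γ → ∀ᶠ n in atTop, a < f n) ∧
  (∀ b : WithTop ℝ, γ < b → ∀ᶠ n in atTop, f n < b)

/-- `s` is a pseudo-convergent sequence with respect to `v`. -/
def IsPC (v : AddValuation K (WithTop ℝ)) (s : ℕ → K) : Prop :=
  ∀ n, v (s (n + 1) - s n) < v (s (n + 2) - s (n + 1))

/-- `s` is a pseudo-divergent sequence with respect to `v`. -/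
def IsPD (v : AddValuation K (WithTop ℝ)) (s : ℕ → K) : Prop :=
  ∀ n, v (s (n + 1) - s (n + 2)) < v (s n - s (n + 1))

/-- `s` is a pseudo-stationary sequence with respect to `v`. -/
def IsPS (v : AddValuation K (WithTop ℝ)) (s : ℕ → K) : Prop :=
  ∀ n m n' m' : ℕ, n ≠ m → n' ≠ m' → v (s n - s m) = v (s n' - s m')

/-- `δ ∈ ℝ ∪ {∞}` is the breadth of the sequence `s`, i.e. `δ = lim_n v(s_{n+1} - s_n)`. -/
def IsBreadth (v : AddValuation K (WithTop ℝ)) (s : ℕ → K) (δ : WithTop ℝ) : Prop :=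
  OrdLim (fun n => v (s (n + 1) - s n)) δ

/-- `α ∈ K` is a pseudo-limit of the pseudo-convergent sequence `s`. -/
def IsPCLimit (v : AddValuation K (WithTop ℝ)) (s : ℕ → K) (α : K) : Prop :=
  ∀ n, v (α - s n) < v (α - s (n + 1))

/-- `α ∈ K` is a pseudo-limit of the pseudo-divergent sequence `s`. -/
def IsPDLimit (v : AddValuation K (WithTop ℝ)) (s : ℕ → K) (α : K) : Prop :=
  ∀ n, v (α - s (n + 1)) < v (α - s n)

/-- `β ∈ K̄` is a pseudo-limit of `s ⊆ K` with respect to an extension `u` of `v`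
to the algebraic closure of `K`. -/
def IsPCLimitAC (u : AddValuation (AlgebraicClosure K) (WithTop ℝ)) (s : ℕ → K)
    (β : AlgebraicClosure K) : Prop :=
  ∀ n, u (β - algebraMap K (AlgebraicClosure K) (s n)) <
    u (β - algebraMap K (AlgebraicClosure K) (s (n + 1)))

/-- `s` is of transcendental type: for every polynomial `f`, `v(f(s_n))` eventually
stabilizes. -/
def IsTranscendentalType (v : AddValuation K (WithTop ℝ)) (s : ℕ → K) : Prop :=
  ∀ f : Polynomial K, ∃ N, ∀ n ≥ N, v (f.eval (s n)) = v (f.eval (s N))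

/-- The ultrametric distance `d(x,y) = e^{-v(x-y)}` on `K`. -/
def dK (v : AddValuation K (WithTop ℝ)) (x y : K) : ℝ := expNeg (v (x - y))

/-- The set `V_E = {φ ∈ K(X) : φ(s_n) ∈ V for all but finitely many n}`. -/
def VESet (v : AddValuation K (WithTop ℝ)) (s : ℕ → K) : Set (RatFunc K) :=
  {φ : RatFunc K | ∀ᶠ n in atTop, 0 ≤ v (RatFunc.eval (RingHom.id K) (s n) φ)}

/-- `Zar(K(X)|V)`: the valuation subrings of `K(X)` containing (the image of) `V`. -/
def ZarSet (v : AddValuation K (WithTop ℝ)) : Set (ValuationSubring (RatFunc K)) :=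
  {W | ∀ x : K, 0 ≤ v x → algebraMap K (RatFunc K) x ∈ W}

/-- `𝒱`: valuation subrings of `K(X)` of the form `V_E`, `E` pseudo-convergent. -/
def VV (v : AddValuation K (WithTop ℝ)) : Set (ValuationSubring (RatFunc K)) :=
  {W | ∃ s : ℕ → K, IsPC v s ∧ (W : Set (RatFunc K)) = VESet v s}

/-- `𝒱(•,δ)`: those `V_E` with `E` pseudo-convergent of breadth `δ`. -/
def VVδ (v : AddValuation K (WithTop ℝ)) (δ : WithTop ℝ) : Set (ValuationSubring (RatFunc K)) :=
  {W | ∃ s : ℕ → K, IsPC v s ∧ IsBreadth v s δ ∧ (W : Set (RatFunc K)) = VESet v s}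

/-- `𝒱_K(•,δ)`: those `V_E` with `E` pseudo-convergent of breadth `δ` having a
pseudo-limit in `K`. -/
def VVKδ (v : AddValuation K (WithTop ℝ)) (δ : WithTop ℝ) : Set (ValuationSubring (RatFunc K)) :=
  {W | ∃ s : ℕ → K, IsPC v s ∧ IsBreadth v s δ ∧ (∃ α : K, IsPCLimit v s α) ∧
    (W : Set (RatFunc K)) = VESet v s}

/-- `𝒱(β,•)`: those `V_E` with `E` pseudo-convergent having `β ∈ K̄` as a pseudo-limit
with respect to `u`. -/
def VVβ (v : AddValuation K (WithTop ℝ)) (u : AddValuation (AlgebraicClosure K) (WithTop ℝ))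
    (β : AlgebraicClosure K) : Set (ValuationSubring (RatFunc K)) :=
  {W | ∃ s : ℕ → K, IsPC v s ∧ IsPCLimitAC u s β ∧ (W : Set (RatFunc K)) = VESet v s}

/-- `𝒱(β,•)` for a pseudo-limit `β ∈ K`. -/
def VVβK (v : AddValuation K (WithTop ℝ)) (β : K) : Set (ValuationSubring (RatFunc K)) :=
  {W | ∃ s : ℕ → K, IsPC v s ∧ IsPCLimit v s β ∧ (W : Set (RatFunc K)) = VESet v s}

/-- `𝒱_div`: those `V_E` with `E` pseudo-divergent. -/
def VVdiv (v : AddValuation K (WithTop ℝ)) : Set (ValuationSubring (RatFunc K)) :=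
  {W | ∃ s : ℕ → K, IsPD v s ∧ (W : Set (RatFunc K)) = VESet v s}

/-- `𝒱_div(•,δ)`: those `V_E` with `E` pseudo-divergent of breadth `δ`. -/
def VVdivδ (v : AddValuation K (WithTop ℝ)) (δ : WithTop ℝ) : Set (ValuationSubring (RatFunc K)) :=
  {W | ∃ s : ℕ → K, IsPD v s ∧ IsBreadth v s δ ∧ (W : Set (RatFunc K)) = VESet v s}

/-- `𝒱_div(β,•)`: those `V_E` with `E` pseudo-divergent having `β ∈ K` as a pseudo-limit. -/
def VVdivβ (v : AddValuation K (WithTop ℝ)) (β : K) : Set (ValuationSubring (RatFunc K)) :=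
  {W | ∃ s : ℕ → K, IsPD v s ∧ IsPDLimit v s β ∧ (W : Set (RatFunc K)) = VESet v s}

/-- `𝒱_stat(•,δ)`: those `V_E` with `E` pseudo-stationary of breadth `δ`. -/
def VVstatδ (v : AddValuation K (WithTop ℝ)) (δ : WithTop ℝ) :
    Set (ValuationSubring (RatFunc K)) :=
  {W | ∃ s : ℕ → K, (∀ n m : ℕ, n ≠ m → v (s n - s m) = δ) ∧
    (W : Set (RatFunc K)) = VESet v s}

/-- `𝒱_stat(β,•)`: those `V_E` with `E` pseudo-stationary having `β` as a pseudo-limit. -/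
def VVstatβ (v : AddValuation K (WithTop ℝ)) (β : K) : Set (ValuationSubring (RatFunc K)) :=
  {W | ∃ (s : ℕ → K) (δ : WithTop ℝ), (∀ n m : ℕ, n ≠ m → v (s n - s m) = δ) ∧
    (∀ n, δ ≤ v (β - s n)) ∧ (W : Set (RatFunc K)) = VESet v s}

/-- The Zariski topology on the valuation subrings of a field `L`, generated by the
sets `B(φ) = {W : φ ∈ W}`. -/
def zarTop (L : Type*) [Field L] : TopologicalSpace (ValuationSubring L) :=
  generateFrom {U | ∃ φ : L, U = {W : ValuationSubring L | φ ∈ W}}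

/-- The constructible topology on the valuation subrings of a field `L`: the coarsest
topology in which all finite intersections `B(φ₁) ∩ ⋯ ∩ B(φ_k)` are open and closed. -/
def consTop (L : Type*) [Field L] : TopologicalSpace (ValuationSubring L) :=
  generateFrom {U | ∃ T : Finset L, U = {W : ValuationSubring L | ∀ φ ∈ T, φ ∈ W} ∨
    U = {W : ValuationSubring L | ∀ φ ∈ T, φ ∈ W}ᶜ}

/-- The subspace Zariski topology on a set of valuation subrings. -/
def zarSub {L : Type*} [Field L] (S : Set (ValuationSubring L)) : TopologicalSpace ↥S :=
  (zarTop L).induced Subtype.val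

/-- The subspace constructible topology on a set of valuation subrings. -/
def consSub {L : Type*} [Field L] (S : Set (ValuationSubring L)) : TopologicalSpace ↥S :=
  (consTop L).induced Subtype.val

/-- `d` is a metric on `X` inducing the topology `t`. -/
def MetrizedBy {X : Type*} (t : TopologicalSpace X) (d : X → X → ℝ) : Prop :=
  (∀ x y, d x y = d y x) ∧ (∀ x y, d x y = 0 ↔ x = y) ∧
  (∀ x y z, d x z ≤ d x y + d y z) ∧
  t = generateFrom {U : Set X | ∃ (x : X) (ε : ℝ), 0 < ε ∧ U = {y | d x y < ε}}

/-- The topology `t` is metrizable. -/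
def IsMetrizable {X : Type*} (t : TopologicalSpace X) : Prop := ∃ d, MetrizedBy t d

/-- The topology `t` is induced by an ultrametric. -/
def IsUltrametrizable {X : Type*} (t : TopologicalSpace X) : Prop :=
  ∃ d, MetrizedBy t d ∧ ∀ x y z, d x z ≤ max (d x y) (d y z)

/-- `dd` computes the distance `d_δ` on `𝒱(•,δ)`:
`d_δ(V_E, V_F) = lim_n max (d(s_n,t_n) - e^{-δ}) 0`. -/
def IsDistδ (v : AddValuation K (WithTop ℝ)) (δ : WithTop ℝ)
    (dd : ValuationSubring (RatFunc K) → ValuationSubring (RatFunc K) → ℝ) : Prop :=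
  ∀ (W W' : ValuationSubring (RatFunc K)) (s t : ℕ → K),
    IsPC v s → IsBreadth v s δ → (W : Set (RatFunc K)) = VESet v s →
    IsPC v t → IsBreadth v t δ → (W' : Set (RatFunc K)) = VESet v t →
    Tendsto (fun n => max (dK v (s n) (t n) - expNeg δ) 0) atTop (𝓝 (dd W W'))

/-- The `Λ`-upper limit topology on the interval `(-∞, b] ⊆ ℝ ∪ {∞}`, generated by the
half-open intervals `(α, λ]` with `λ ∈ Λ ∪ {∞}`. -/
def upperTopWT (b : WithTop ℝ) (Λ : Set ℝ) : TopologicalSpace {γ : WithTop ℝ // γ ≤ b} :=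
  generateFrom {U | ∃ α lam : WithTop ℝ, α ≤ b ∧
    (lam = ⊤ ∨ ∃ r ∈ Λ, lam = (r : WithTop ℝ)) ∧
    U = {γ : {γ : WithTop ℝ // γ ≤ b} | α < (γ : WithTop ℝ) ∧ (γ : WithTop ℝ) ≤ lam}}

/-- The `Λ`-upper limit topology on `(-∞, +∞] = ℝ ∪ {∞}`. -/
def upperTopAll (Λ : Set ℝ) : TopologicalSpace (WithTop ℝ) :=
  generateFrom {U | ∃ α lam : WithTop ℝ,
    (lam = ⊤ ∨ ∃ r ∈ Λ, lam = (r : WithTop ℝ)) ∧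
    U = {γ : WithTop ℝ | α < γ ∧ γ ≤ lam}}

/-- The `Λ`-upper limit topology on an interval `(a, b]` of `ℝ ∪ {±∞}`. -/
def upperTopE (a b : EReal) (Λ : Set ℝ) : TopologicalSpace {x : EReal // a < x ∧ x ≤ b} :=
  generateFrom {U | ∃ α lam : EReal, (a < α ∧ α ≤ b) ∧
    (lam = ⊤ ∨ ∃ r ∈ Λ, lam = (r : EReal)) ∧
    U = {x : {x : EReal // a < x ∧ x ≤ b} | α < (x : EReal) ∧ (x : EReal) ≤ lam}}


/-- `𝒲`: the valuation domains of the valuations `w_E : φ ↦ lim_n v(φ(s_n))`, as `E`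
ranges over the pseudo-convergent sequences for which `w_E` is a valuation. -/
def WW (v : AddValuation K (WithTop ℝ)) : Set (ValuationSubring (RatFunc K)) :=
  {W | ∃ (s : ℕ → K) (w : AddValuation (RatFunc K) (WithTop ℝ)), IsPC v s ∧
    (∀ φ : RatFunc K, OrdLim (fun n => v (RatFunc.eval (RingHom.id K) (s n) φ)) (w φ)) ∧
    (W : Set (RatFunc K)) = {φ : RatFunc K | 0 ≤ w φ}}

section Helpers

lemma expNeg_coe (r : ℝ) : expNeg (r : WithTop ℝ) = Real.exp (-r) := rfl

lemma expNeg_top : expNeg (⊤ : WithTop ℝ) = 0 := rfl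

lemma expNeg_nonneg (γ : WithTop ℝ) : 0 ≤ expNeg γ := by
  induction γ using WithTop.recTopCoe with
  | top => exact le_refl _
  | coe r => exact (Real.exp_pos _).le

lemma expNeg_anti {a b : WithTop ℝ} (h : a ≤ b) : expNeg b ≤ expNeg a := by
  induction a using WithTop.recTopCoe with
  | top => rw [top_le_iff.1 h]
  | coe r =>
    induction b using WithTop.recTopCoe with
    | top => exact (Real.exp_pos _).le
    | coe q =>
      exact Real.exp_le_exp.2 (neg_le_neg (WithTop.coe_le_coe.1 h))

lemma expNeg_lt {a : ℝ} {b : WithTop ℝ} (h : (a : WithTop ℝ) < b) :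
    expNeg b < expNeg (a : WithTop ℝ) := by
  induction b using WithTop.recTopCoe with
  | top => exact Real.exp_pos _
  | coe q => exact Real.exp_lt_exp.2 (neg_lt_neg (WithTop.coe_lt_coe.1 h))

lemma zero_le_iff_of_coe_eq {x : WithTop ℝ} {a b : ℝ} (h : (a : WithTop ℝ) = x + b) :
    0 ≤ x ↔ b ≤ a := by
  induction x using WithTop.recTopCoe with
  | top => rw [top_add] at h; exact absurd h (WithTop.coe_ne_top)
  | coe r =>
    rw [← WithTop.coe_add] at h
    have hab : a = r + b := WithTop.coe_injective h
    rw [show (0 : WithTop ℝ) = ((0 : ℝ) : WithTop ℝ) from rfl, WithTop.coe_le_coe]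
    constructor <;> intro <;> linarith

lemma zero_le_neg_add_iff {x : WithTop ℝ} {r : ℝ} :
    0 ≤ ((-r : ℝ) : WithTop ℝ) + x ↔ (r : WithTop ℝ) ≤ x := by
  induction x using WithTop.recTopCoe with
  | top => simp [add_top]
  | coe q =>
    rw [← WithTop.coe_add, show (0 : WithTop ℝ) = ((0 : ℝ) : WithTop ℝ) from rfl,
      WithTop.coe_le_coe, WithTop.coe_le_coe]
    constructor <;> intro <;> linarith

end Helpers



lemma v_ne_top {F : Type*} [Field F] (w : AddValuation F (WithTop ℝ)) {x : F} (hx : x ≠ 0) :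
    w x ≠ ⊤ := w.ne_top_iff.2 hx

lemma v_coe_inv {F : Type*} [Field F] (w : AddValuation F (WithTop ℝ)) {x : F} {r : ℝ}
    (h : w x = (r : WithTop ℝ)) : w x⁻¹ = ((-r : ℝ) : WithTop ℝ) := by
  have hx : x ≠ 0 := by
    intro h0
    rw [h0, AddValuation.map_zero] at h
    exact WithTop.coe_ne_top h.symm
  have h1 : w x + w x⁻¹ = 0 := by
    rw [← AddValuation.map_mul, mul_inv_cancel₀ hx, AddValuation.map_one]
  rw [h] at h1
  rcases (WithTop.ne_top_iff_exists.1 (v_ne_top w (inv_ne_zero hx))) with ⟨q, hq⟩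
  rw [← hq, ← WithTop.coe_add, show (0 : WithTop ℝ) = ((0 : ℝ) : WithTop ℝ) from rfl] at h1
  have h2 : r + q = 0 := WithTop.coe_injective h1
  rw [← hq, WithTop.coe_inj]
  linarith

lemma coe_le_add_coe {x : WithTop ℝ} {r : ℝ} : (r : WithTop ℝ) ≤ x + r ↔ 0 ≤ x := by
  induction x using WithTop.recTopCoe with
  | top => simp [top_add]
  | coe q =>
    rw [← WithTop.coe_add, WithTop.coe_le_coe,
      show (0 : WithTop ℝ) = ((0 : ℝ) : WithTop ℝ) from rfl, WithTop.coe_le_coe]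
    constructor <;> intro <;> linarith

lemma v_pow_coe {F : Type*} [Field F] (w : AddValuation F (WithTop ℝ)) {y : F} {r : ℝ}
    (h : w y = (r : WithTop ℝ)) (k : ℕ) :
    w (y ^ k) = (((k : ℝ) * r : ℝ) : WithTop ℝ) := by
  induction k with
  | zero => simp [AddValuation.map_one]
  | succ k ih =>
    rw [pow_succ, AddValuation.map_mul, ih, h, ← WithTop.coe_add, WithTop.coe_inj]
    push_cast
    ring

/-- The valuation subring of a real-valued additive valuation. -/
def ringOfInts {K : Type*} [Field K] (v : AddValuation K (WithTop ℝ)) : ValuationSubring K where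
  carrier := {x | 0 ≤ v x}
  one_mem' := by simp [AddValuation.map_one]
  mul_mem' := by
    intro a b (ha : 0 ≤ v a) (hb : 0 ≤ v b)
    show 0 ≤ v (a * b)
    rw [AddValuation.map_mul]
    exact le_trans (by simp) (add_le_add ha hb)
  zero_mem' := by simp [AddValuation.map_zero]
  add_mem' := by
    intro a b (ha : 0 ≤ v a) (hb : 0 ≤ v b)
    exact le_trans (le_min ha hb) (AddValuation.map_add v a b)
  neg_mem' := by
    intro a (ha : 0 ≤ v a)
    show 0 ≤ v (-a)
    rwa [AddValuation.map_neg]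
  mem_or_inv_mem' := by
    intro x
    by_cases h : 0 ≤ v x
    · exact Or.inl h
    · right
      push_neg at h
      rcases WithTop.ne_top_iff_exists.1 h.ne_top with ⟨r, hr⟩
      have hr' : v x = (r : WithTop ℝ) := hr.symm
      show 0 ≤ v x⁻¹
      rw [v_coe_inv v hr']
      rw [hr'] at h
      have : r < 0 := by exact_mod_cast h
      exact_mod_cast (by linarith : (0:ℝ) ≤ -r)

theorem exists_ext {K L : Type*} [Field K] [Field L] [Algebra K L] [Algebra.IsAlgebraic K L]
    (v : AddValuation K (WithTop ℝ)) :
    ∃ u : AddValuation L (WithTop ℝ), ∀ x : K, u (algebraMap K L x) = v x := by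
  classical
  set ι : K →+* L := algebraMap K L with hιdef
  have hιinj : Function.Injective ι := ι.injective
  set V : ValuationSubring K := ringOfInts v with hV
  set fV : V →+* L := ι.comp V.subtype with hfV
  obtain ⟨W, hW⟩ := (LocalSubring.range fV).exists_le_valuationSubring
  obtain ⟨hle, hloc⟩ := hW
  -- membership of images
  have hmemW : ∀ x : K, 0 ≤ v x → ι x ∈ W := by
    intro x hx
    exact hle (by exact ⟨⟨x, hx⟩, rfl⟩)
  -- key local-ness fact
  have hF2 : ∀ x : K, x ≠ 0 → 0 < v x → (ι x)⁻¹ ∉ W := by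
    intro x hx hvx hinv
    have hxW : ι x ∈ W := hmemW x hvx.le
    have hmem : ι x ∈ (LocalSubring.range fV).toSubring := ⟨⟨x, hvx.le⟩, rfl⟩
    set a₀ : (LocalSubring.range fV).toSubring := ⟨ι x, hmem⟩ with ha₀
    have hunit : IsUnit (Subring.inclusion hle a₀) := by
      rw [isUnit_iff_exists_inv]
      refine ⟨⟨(ι x)⁻¹, hinv⟩, ?_⟩
      ext
      exact mul_inv_cancel₀ ((map_ne_zero ι).2 hx)
    have := hloc.map_nonunit a₀ hunit
    rw [isUnit_iff_exists_inv] at this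
    obtain ⟨b, hb⟩ := this
    obtain ⟨⟨y, hy⟩, hby⟩ := b.2
    have hprod : (a₀ : L) * (b : L) = 1 := by exact_mod_cast congrArg Subtype.val hb
    have hxy : x * y = 1 := by
      apply hιinj
      rw [map_mul, map_one]
      have h1 : (a₀ : L) = ι x := rfl
      have h2 : (b : L) = ι y := hby.symm
      rw [← h1, ← h2]; exact hprod
    have hyx : y = x⁻¹ := eq_inv_of_mul_eq_one_right hxy
    -- v y < 0 contradicts hy : y ∈ V
    rcases WithTop.ne_top_iff_exists.1 (v_ne_top v hx) with ⟨r, hr⟩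
    have hvy : v y = ((-r : ℝ) : WithTop ℝ) := by
      rw [hyx]; exact v_coe_inv v hr.symm
    have hy' : (0 : WithTop ℝ) ≤ v y := hy
    rw [hvy] at hy'
    have hr0 : (0:ℝ) < r := by
      have := hvx; rw [← hr] at this; exact_mod_cast this
    have : (0:ℝ) ≤ -r := by exact_mod_cast hy'
    linarith
  -- "unit pair" predicate
  set P : L → Prop := fun z => z ∈ W ∧ z⁻¹ ∈ W with hP
  have hPmul : ∀ {z z' : L}, P z → P z' → P (z * z') := by
    intro z z' hz hz'
    exact ⟨mul_mem hz.1 hz'.1, by rw [mul_inv]; exact mul_mem hz.2 hz'.2⟩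
  have hPpow : ∀ {z : L} (k : ℕ), P z → P (z ^ k) := by
    intro z k hz
    induction k with
    | zero =>
      rw [pow_zero]
      exact ⟨one_mem W, by rw [inv_one]; exact one_mem W⟩
    | succ k ih => rw [pow_succ]; exact hPmul ih hz
  have hPinv : ∀ {z : L}, P z → P z⁻¹ := by
    intro z hz; exact ⟨hz.2, by rw [inv_inv]; exact hz.1⟩
  -- P for images of value-zero elements, and conversely
  have hPim : ∀ y : K, v y = 0 → P (ι y) := by
    intro y hy
    refine ⟨hmemW y hy.ge, ?_⟩
    have h0 : v y = ((0:ℝ) : WithTop ℝ) := by rw [hy]; rfl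
    have h1 := v_coe_inv v h0
    rw [← map_inv₀]
    apply hmemW
    rw [h1]
    exact_mod_cast (by norm_num : (0:ℝ) ≤ -0)
  have hPim' : ∀ y : K, y ≠ 0 → P (ι y) → v y = 0 := by
    intro y hy hp
    rcases WithTop.ne_top_iff_exists.1 (v_ne_top v hy) with ⟨r, hr⟩
    rcases lt_trichotomy (0 : WithTop ℝ) (v y) with h | h | h
    · exact absurd hp.2 (hF2 y hy h)
    · exact h.symm
    · exfalso
      have hr' : v y⁻¹ = ((-r : ℝ) : WithTop ℝ) := v_coe_inv v hr.symm
      have hpos : 0 < v y⁻¹ := by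
        rw [hr']
        rw [← hr] at h
        have : r < 0 := by exact_mod_cast h
        exact_mod_cast (by linarith : (0:ℝ) < -r)
      have := hF2 y⁻¹ (inv_ne_zero hy) hpos
      rw [map_inv₀, inv_inv] at this
      exact this hp.1
  -- existence of unit pairs
  have hpair0 : ∀ x : L, x ≠ 0 → ∃ (n : ℕ) (y : K), 0 < n ∧ y ≠ 0 ∧ P (x ^ n * ι y) := by
    intro x hx
    have hint : IsIntegral K x := (Algebra.IsAlgebraic.isAlgebraic x).isIntegral
    set p := minpoly K x with hpdef
    have hp0 : p ≠ 0 := minpoly.ne_zero hint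
    set T : ℕ → L := fun i => ι (p.coeff i) * x ^ i with hT
    have hsum : ∑ i ∈ p.support, T i = 0 := by
      have h := minpoly.aeval K x
      rw [Polynomial.aeval_def, Polynomial.eval₂_eq_sum, Polynomial.sum_def] at h
      exact h
    have hTne : ∀ i ∈ p.support, T i ≠ 0 := by
      intro i hi
      exact mul_ne_zero ((map_ne_zero ι).2 (Polynomial.mem_support_iff.1 hi)) (pow_ne_zero _ hx)
    obtain ⟨i₀, hi₀, hmax⟩ := Finset.exists_max_image p.support (fun i => W.valuation (T i))
      (Polynomial.support_nonempty.2 hp0)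
    have hkey : ∃ j ∈ p.support, j ≠ i₀ ∧ W.valuation (T j) = W.valuation (T i₀) := by
      by_contra hcon
      push_neg at hcon
      have hlt : ∀ j ∈ p.support.erase i₀, W.valuation (T j) < W.valuation (T i₀) := by
        intro j hj
        have hj' := Finset.mem_of_mem_erase hj
        exact lt_of_le_of_ne (hmax j hj') (hcon j hj' (Finset.ne_of_mem_erase hj))
      have h1 : ∑ j ∈ p.support.erase i₀, T j = - T i₀ := by
        have h := Finset.add_sum_erase p.support T hi₀
        rw [hsum] at h
        linear_combination h
      have h2 : W.valuation (∑ j ∈ p.support.erase i₀, T j) < W.valuation (T i₀) :=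
        Valuation.map_sum_lt _ ((Valuation.ne_zero_iff _).2 (hTne i₀ hi₀)) hlt
      rw [h1, Valuation.map_neg] at h2
      exact lt_irrefl _ h2
    obtain ⟨j, hj, hjne, hjval⟩ := hkey
    have hrat : P (T j / T i₀) := by
      have hv : W.valuation (T j / T i₀) = 1 := by
        rw [map_div₀, hjval, div_self ((Valuation.ne_zero_iff _).2 (hTne i₀ hi₀))]
      constructor
      · exact (ValuationSubring.valuation_le_one_iff W _).1 hv.le
      · have h : W.valuation (T j / T i₀)⁻¹ = 1 := by rw [map_inv₀, hv, inv_one]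
        exact (ValuationSubring.valuation_le_one_iff W _).1 h.le
    have hcj : p.coeff j ≠ 0 := Polynomial.mem_support_iff.1 hj
    have hci : p.coeff i₀ ≠ 0 := Polynomial.mem_support_iff.1 hi₀
    rcases lt_or_gt_of_ne hjne with hlt | hgt
    · -- j < i₀ : use inverse ratio
      have hrat' : P (T i₀ / T j) := by
        have h : T i₀ / T j = (T j / T i₀)⁻¹ := by rw [inv_div]
        rw [h]; exact hPinv hrat
      refine ⟨i₀ - j, p.coeff i₀ / p.coeff j, Nat.sub_pos_of_lt hlt, div_ne_zero hci hcj, ?_⟩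
      have hpow : x ^ (i₀ - j) * x ^ j = x ^ i₀ := pow_sub_mul_pow x hlt.le
      have hident : x ^ (i₀ - j) * ι (p.coeff i₀ / p.coeff j) = T i₀ / T j := by
        rw [hT, map_div₀]
        simp only
        rw [← hpow]
        have hxj : x ^ j ≠ 0 := pow_ne_zero _ hx
        have hcjL : ι (p.coeff j) ≠ 0 := (map_ne_zero ι).2 hcj
        field_simp
      rw [hident]; exact hrat'
    · refine ⟨j - i₀, p.coeff j / p.coeff i₀, Nat.sub_pos_of_lt hgt, div_ne_zero hcj hci, ?_⟩
      have hpow : x ^ (j - i₀) * x ^ i₀ = x ^ j := pow_sub_mul_pow x hgt.le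
      have hident : x ^ (j - i₀) * ι (p.coeff j / p.coeff i₀) = T j / T i₀ := by
        rw [hT, map_div₀]
        simp only
        rw [← hpow]
        have hxi : x ^ i₀ ≠ 0 := pow_ne_zero _ hx
        have hciL : ι (p.coeff i₀) ≠ 0 := (map_ne_zero ι).2 hci
        field_simp
      rw [hident]; exact hrat
  have hpair : ∀ x : L, ∃ (n : ℕ) (y : K), x ≠ 0 → (0 < n ∧ y ≠ 0 ∧ P (x ^ n * ι y)) := by
    intro x
    by_cases hx : x = 0
    · exact ⟨1, 1, fun h => absurd hx h⟩
    · obtain ⟨n, y, h1, h2, h3⟩ := hpair0 x hx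
      exact ⟨n, y, fun _ => ⟨h1, h2, h3⟩⟩
  choose nn yy hnn using hpair
  set rr : K → ℝ := fun y => (v y).untopD 0 with hrr
  have hrr_eq : ∀ y : K, y ≠ 0 → v y = ((rr y : ℝ) : WithTop ℝ) := by
    intro y hy
    rcases WithTop.ne_top_iff_exists.1 (v_ne_top v hy) with ⟨r, hr⟩
    rw [← hr, hrr]
    simp [← hr]
  have hUNIQ : ∀ (x : L), x ≠ 0 → ∀ (a : ℕ) (b : K), 0 < a → b ≠ 0 → P (x ^ a * ι b) →
      ∀ (c : ℕ) (e : K), 0 < c → e ≠ 0 → P (x ^ c * ι e) →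
      (c : ℝ) * rr b = (a : ℝ) * rr e := by
    intro x hx a b ha hb hPab c e hc he hPce
    have h1 : P ((x ^ a * ι b) ^ c) := hPpow c hPab
    have h2 : P ((x ^ c * ι e) ^ a) := hPpow a hPce
    have hratP : P (((x ^ a * ι b) ^ c) / ((x ^ c * ι e) ^ a)) := by
      rw [div_eq_mul_inv]
      exact hPmul h1 (hPinv h2)
    have hxe : x ^ c * ι e ≠ 0 := mul_ne_zero (pow_ne_zero _ hx) ((map_ne_zero ι).2 he)
    have hid : ((x ^ a * ι b) ^ c) / ((x ^ c * ι e) ^ a) = ι (b ^ c / e ^ a) := by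
      rw [map_div₀, map_pow, map_pow]
      have hxa : x ≠ 0 := hx
      have hie : ι e ≠ 0 := (map_ne_zero ι).2 he
      field_simp
      ring
    rw [hid] at hratP
    have hbe : b ^ c / e ^ a ≠ 0 := div_ne_zero (pow_ne_zero _ hb) (pow_ne_zero _ he)
    have hv0 := hPim' _ hbe hratP
    have hveq : v (b ^ c) = v (e ^ a) := by
      have h3 : v (b ^ c) = v (b ^ c / e ^ a * e ^ a) := by
        rw [div_mul_cancel₀ _ (pow_ne_zero _ he)]
      rw [h3, AddValuation.map_mul, hv0, zero_add]
    rw [v_pow_coe v (hrr_eq b hb) c, v_pow_coe v (hrr_eq e he) a] at hveq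
    exact_mod_cast hveq
  set uf : L → WithTop ℝ :=
    fun x => if x = 0 then ⊤ else ((- rr (yy x) / (nn x) : ℝ) : WithTop ℝ) with huf
  have huf0 : uf 0 = ⊤ := by rw [huf]; simp
  have hufne : ∀ x : L, x ≠ 0 → uf x ≠ ⊤ := by
    intro x hx
    rw [huf]; simp only [if_neg hx]
    exact WithTop.coe_ne_top
  have hufval : ∀ (x : L), x ≠ 0 → ∀ (a : ℕ) (b : K), 0 < a → b ≠ 0 → P (x ^ a * ι b) →
      uf x = ((- rr b / (a : ℝ) : ℝ) : WithTop ℝ) := by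
    intro x hx a b ha hb hPab
    obtain ⟨hn, hy, hp⟩ := hnn x hx
    rw [huf]; simp only [if_neg hx]
    rw [WithTop.coe_inj]
    have huq := hUNIQ x hx (nn x) (yy x) hn hy hp a b ha hb hPab
    have h1 : (0:ℝ) < (nn x : ℝ) := by exact_mod_cast hn
    have h2 : (0:ℝ) < (a : ℝ) := by exact_mod_cast ha
    field_simp
    linarith [huq]
  have hufι : ∀ k : K, uf (ι k) = v k := by
    intro k
    by_cases hk : k = 0
    · rw [hk, map_zero, huf0, AddValuation.map_zero]
    · have hP1 : P ((ι k) ^ 1 * ι k⁻¹) := by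
        rw [pow_one, ← map_mul, mul_inv_cancel₀ hk, map_one]
        exact ⟨one_mem W, by rw [inv_one]; exact one_mem W⟩
      rw [hufval (ι k) ((map_ne_zero ι).2 hk) 1 k⁻¹ one_pos (inv_ne_zero hk) hP1]
      have h2 : rr k⁻¹ = - rr k := by
        have ha := v_coe_inv v (hrr_eq k hk)
        have hb := hrr_eq k⁻¹ (inv_ne_zero hk)
        exact WithTop.coe_inj.1 (hb.symm.trans ha)
      rw [h2, hrr_eq k hk, WithTop.coe_inj]
      norm_num
  have hufmem : ∀ x : L, x ≠ 0 → (x ∈ W ↔ 0 ≤ uf x) := by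
    intro x hx
    obtain ⟨hn, hy, hp⟩ := hnn x hx
    rw [hufval x hx _ _ hn hy hp]
    have hnn0 : (0:ℝ) < (nn x : ℝ) := by exact_mod_cast hn
    constructor
    · intro hxW
      by_contra hneg
      push_neg at hneg
      have hry : 0 < rr (yy x) := by
        have h : - rr (yy x) / (nn x : ℝ) < 0 := by
          have := hneg
          rw [show (0 : WithTop ℝ) = ((0:ℝ) : WithTop ℝ) from rfl, WithTop.coe_lt_coe] at this
          exact this
        by_contra hc
        push_neg at hc
        have h2 : 0 ≤ -rr (yy x) / (nn x:ℝ) := div_nonneg (by linarith) hnn0.le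
        linarith
      have hvy : 0 < v (yy x) := by
        rw [hrr_eq _ hy]
        exact_mod_cast hry
      apply hF2 (yy x) hy hvy
      have hxpow : x ^ (nn x) ∈ W := pow_mem hxW _
      have hιy : ι (yy x) ≠ 0 := (map_ne_zero ι).2 hy
      have hxp : x ^ (nn x) ≠ 0 := pow_ne_zero _ hx
      have hid : (ι (yy x))⁻¹ = x ^ (nn x) * (x ^ (nn x) * ι (yy x))⁻¹ := by
        field_simp
      rw [hid]
      exact mul_mem hxpow hp.2
    · intro hge
      have hry : rr (yy x) ≤ 0 := by
        have h : (0:ℝ) ≤ - rr (yy x) / (nn x:ℝ) := by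
          rw [show (0 : WithTop ℝ) = ((0:ℝ) : WithTop ℝ) from rfl, WithTop.coe_le_coe] at hge
          exact hge
        by_contra hc
        push_neg at hc
        have h2 : -rr (yy x) / (nn x:ℝ) < 0 := div_neg_of_neg_of_pos (by linarith) hnn0
        linarith
      have hyinv : ι (yy x)⁻¹ ∈ W := by
        apply hmemW
        rw [v_coe_inv v (hrr_eq _ hy)]
        exact_mod_cast (by linarith : (0:ℝ) ≤ - rr (yy x))
      have hxn : x ^ (nn x) ∈ W := by
        have hid : x ^ (nn x) = (x ^ (nn x) * ι (yy x)) * ι (yy x)⁻¹ := by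
          rw [mul_assoc, ← map_mul, mul_inv_cancel₀ hy, map_one, mul_one]
        rw [hid]; exact mul_mem hp.1 hyinv
      by_contra hxW
      have hx1 : 1 < W.valuation x :=
        not_le.1 (fun hle => hxW ((ValuationSubring.valuation_le_one_iff W x).1 hle))
      have hgt : 1 < W.valuation (x ^ (nn x)) := by
        rw [map_pow]
        exact one_lt_pow₀ hx1 hn.ne'
      exact absurd ((ValuationSubring.valuation_le_one_iff W _).2 hxn) (not_le.2 hgt)
  have hufmul : ∀ x y : L, uf (x * y) = uf x + uf y := by
    intro x y
    by_cases hx : x = 0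
    · rw [hx, zero_mul, huf0, top_add]
    by_cases hy : y = 0
    · rw [hy, mul_zero, huf0, add_top]
    obtain ⟨hnx, hyx, hpx⟩ := hnn x hx
    obtain ⟨hny, hyy', hpy⟩ := hnn y hy
    have hPxy : P ((x*y) ^ (nn x * nn y) * ι ((yy x) ^ (nn y) * (yy y) ^ (nn x))) := by
      have h1 : P ((x ^ nn x * ι (yy x)) ^ (nn y)) := hPpow _ hpx
      have h2 : P ((y ^ nn y * ι (yy y)) ^ (nn x)) := hPpow _ hpy
      have hident : (x*y) ^ (nn x * nn y) * ι ((yy x) ^ (nn y) * (yy y) ^ (nn x))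
          = (x ^ nn x * ι (yy x)) ^ (nn y) * (y ^ nn y * ι (yy y)) ^ (nn x) := by
        rw [map_mul, map_pow, map_pow]
        ring
      rw [hident]
      exact hPmul h1 h2
    have hyprod : (yy x) ^ (nn y) * (yy y) ^ (nn x) ≠ 0 :=
      mul_ne_zero (pow_ne_zero _ hyx) (pow_ne_zero _ hyy')
    rw [hufval _ (mul_ne_zero hx hy) _ _ (Nat.mul_pos hnx hny) hyprod hPxy,
        hufval x hx _ _ hnx hyx hpx, hufval y hy _ _ hny hyy' hpy, ← WithTop.coe_add,
        WithTop.coe_inj]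
    have hrmul : rr ((yy x) ^ (nn y) * (yy y) ^ (nn x))
        = (nn y : ℝ) * rr (yy x) + (nn x : ℝ) * rr (yy y) := by
      have h1 : v ((yy x) ^ (nn y) * (yy y) ^ (nn x))
          = (((nn y : ℝ) * rr (yy x) + (nn x : ℝ) * rr (yy y) : ℝ) : WithTop ℝ) := by
        rw [AddValuation.map_mul, v_pow_coe v (hrr_eq _ hyx), v_pow_coe v (hrr_eq _ hyy'),
          ← WithTop.coe_add]
      have h2 := hrr_eq _ hyprod
      exact WithTop.coe_inj.1 (h2.symm.trans h1)
    rw [hrmul]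
    have hx0 : (0:ℝ) < (nn x : ℝ) := by exact_mod_cast hnx
    have hy0 : (0:ℝ) < (nn y : ℝ) := by exact_mod_cast hny
    push_cast
    field_simp
    ring
  have hufgemem : ∀ x : L, x ≠ 0 → 0 ≤ uf x → x ∈ W := fun x hx h => (hufmem x hx).2 h
  have hufadd : ∀ x y : L, min (uf x) (uf y) ≤ uf (x + y) := by
    have key : ∀ x y : L, x ≠ 0 → y ≠ 0 → x + y ≠ 0 → uf x ≤ uf y → uf x ≤ uf (x + y) := by
      intro x y hx hy hxy hle
      have ht : y / x ≠ 0 := div_ne_zero hy hx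
      have h1 : uf y = uf (y/x) + uf x := by
        rw [← hufmul, div_mul_cancel₀ _ hx]
      have h2 : 0 ≤ uf (y/x) := by
        rcases WithTop.ne_top_iff_exists.1 (hufne x hx) with ⟨r, hr⟩
        rw [h1, ← hr] at hle
        exact coe_le_add_coe.1 hle
      have h3 : (1 + y/x) ∈ W := add_mem (one_mem W) (hufgemem _ ht h2)
      have h6 : x + y = x * (1 + y/x) := by field_simp
      have h4 : 1 + y/x ≠ 0 := by
        intro h0
        apply hxy
        rw [h6, h0, mul_zero]
      have h5 : 0 ≤ uf (1 + y/x) := (hufmem _ h4).1 h3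
      rw [h6, hufmul]
      calc uf x = uf x + 0 := (add_zero _).symm
        _ ≤ uf x + uf (1 + y/x) := add_le_add_right h5 _
    intro x y
    by_cases hx : x = 0
    · rw [hx, zero_add]; exact min_le_right _ _
    by_cases hy : y = 0
    · rw [hy, add_zero]; exact min_le_left _ _
    by_cases hxy : x + y = 0
    · rw [hxy, huf0]; exact le_top
    rcases le_total (uf x) (uf y) with h | h
    · exact le_trans (min_le_left _ _) (key x y hx hy hxy h)
    · have := key y x hy hx (by rwa [add_comm]) h
      rw [add_comm] at this
      exact le_trans (min_le_right _ _) this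
  have huf1 : uf 1 = 0 := by
    rw [← map_one ι, hufι, AddValuation.map_one]
  exact ⟨AddValuation.of uf huf0 huf1 hufadd hufmul, fun x => hufι x⟩




/-- Eventual sign condition for `d + m·γ` as `γ ↑ δ`. -/
def COND (δ : WithTop ℝ) (d m : ℝ) : Prop :=
  WithTop.recTopCoe (0 < m ∨ (m = 0 ∧ 0 ≤ d))
    (fun D => 0 < d + m * D ∨ (d + m * D = 0 ∧ m ≤ 0)) δ

lemma COND_top (d m : ℝ) : COND ⊤ d m ↔ (0 < m ∨ (m = 0 ∧ 0 ≤ d)) := Iff.rfl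

lemma COND_coe (D d m : ℝ) :
    COND (D : WithTop ℝ) d m ↔ (0 < d + m * D ∨ (d + m * D = 0 ∧ m ≤ 0)) := Iff.rfl

/-- There is a real threshold `θ < δ` above which the sign of `d + m·μ` is `COND δ d m`. -/
lemma exists_theta' (δ : WithTop ℝ) (d m : ℝ) (hδ : ∃ r : ℝ, (r : WithTop ℝ) < δ) :
    ∃ θ : ℝ, (θ : WithTop ℝ) < δ ∧
      ∀ μ : ℝ, θ < μ → (μ : WithTop ℝ) < δ → (0 ≤ d + m * μ ↔ COND δ d m) := by
  induction δ using WithTop.recTopCoe with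
  | top =>
    rcases lt_trichotomy m 0 with hm | hm | hm
    · refine ⟨d / (-m), WithTop.coe_lt_top _, fun μ hμ _ => ?_⟩
      rw [COND_top]
      have hm' : (0:ℝ) < -m := by linarith
      have : d < μ * (-m) := (div_lt_iff₀ hm').1 hμ
      constructor
      · intro h; exfalso; nlinarith
      · rintro (h | ⟨h, _⟩) <;> linarith
    · refine ⟨0, WithTop.coe_lt_top _, fun μ _ _ => ?_⟩
      rw [COND_top, hm]
      constructor
      · intro h; right; exact ⟨rfl, by linarith⟩
      · rintro (h | ⟨_, h⟩) <;> linarith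
    · refine ⟨(-d) / m, WithTop.coe_lt_top _, fun μ hμ _ => ?_⟩
      rw [COND_top]
      have : -d < μ * m := (div_lt_iff₀ hm).1 hμ
      constructor
      · intro _; exact Or.inl hm
      · intro _; linarith
  | coe D =>
    rcases lt_trichotomy (d + m * D) 0 with hc | hc | hc
    · -- COND is false
      have hcond : ¬ COND (D : WithTop ℝ) d m := by
        rw [COND_coe]; rintro (h | ⟨h, _⟩) <;> linarith
      rcases le_or_gt m 0 with hm | hm
      · rcases eq_or_lt_of_le hm with hm0 | hmneg
        · subst hm0
          refine ⟨D - 1, by exact_mod_cast (by linarith : D - 1 < D), fun μ hμ hμD => ?_⟩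
          simp only [hcond, iff_false, not_le]
          nlinarith
        · refine ⟨max (D - 1) (d / (-m)), by exact_mod_cast (by
            apply max_lt (by linarith)
            rw [div_lt_iff₀ (by linarith : (0:ℝ) < -m)]
            nlinarith : max (D - 1) (d / (-m)) < D), fun μ hμ hμD => ?_⟩
          simp only [hcond, iff_false, not_le]
          have h1 : d / (-m) < μ := lt_of_le_of_lt (le_max_right _ _) hμ
          have h2 : d < μ * (-m) := (div_lt_iff₀ (by linarith : (0:ℝ) < -m)).1 h1
          nlinarith
      · refine ⟨D - 1, by exact_mod_cast (by linarith : D - 1 < D), fun μ hμ hμD => ?_⟩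
        simp only [hcond, iff_false, not_le]
        have hμD' : μ < D := by exact_mod_cast hμD
        nlinarith
    · -- d + m D = 0
      rcases le_or_gt m 0 with hm | hm
      · have hcond : COND (D : WithTop ℝ) d m := by rw [COND_coe]; exact Or.inr ⟨hc, hm⟩
        refine ⟨D - 1, by exact_mod_cast (by linarith : D - 1 < D), fun μ hμ hμD => ?_⟩
        simp only [hcond, iff_true]
        have hμD' : μ < D := by exact_mod_cast hμD
        nlinarith
      · have hcond : ¬ COND (D : WithTop ℝ) d m := by
          rw [COND_coe]; rintro (h | ⟨_, h⟩) <;> linarith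
        refine ⟨D - 1, by exact_mod_cast (by linarith : D - 1 < D), fun μ hμ hμD => ?_⟩
        simp only [hcond, iff_false, not_le]
        have hμD' : μ < D := by exact_mod_cast hμD
        nlinarith
    · -- 0 < d + m D : COND true
      have hcond : COND (D : WithTop ℝ) d m := by rw [COND_coe]; exact Or.inl hc
      rcases le_or_gt m 0 with hm | hm
      · refine ⟨D - 1, by exact_mod_cast (by linarith : D - 1 < D), fun μ hμ hμD => ?_⟩
        simp only [hcond, iff_true]
        have hμD' : μ < D := by exact_mod_cast hμD
        nlinarith
      · refine ⟨max (D - 1) ((-d) / m), by exact_mod_cast (by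
          apply max_lt (by linarith)
          rw [div_lt_iff₀ hm]
          nlinarith : max (D - 1) ((-d) / m) < D), fun μ hμ hμD => ?_⟩
        simp only [hcond, iff_true]
        have h1 : (-d) / m < μ := lt_of_le_of_lt (le_max_right _ _) hμ
        have h2 : -d < μ * m := (div_lt_iff₀ hm).1 h1
        nlinarith

/-- Criterion for the eventual inequality `0 ≤ d + m·γ n`. -/
lemma crit {γ : ℕ → ℝ} {δ : WithTop ℝ} (hlt : ∀ n, (γ n : WithTop ℝ) < δ)
    (hev : ∀ a : WithTop ℝ, a < δ → ∀ᶠ n in atTop, a < (γ n : WithTop ℝ)) (d m : ℝ) :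
    (∀ᶠ n in atTop, 0 ≤ d + m * γ n) ↔ COND δ d m := by
  induction δ using WithTop.recTopCoe with
  | top =>
    rw [COND_top]
    constructor
    · intro h
      rcases lt_trichotomy m 0 with hm | hm | hm
      · exfalso
        have hev' : ∀ᶠ n in atTop, ((d + 1) / (-m) : ℝ) < γ n := by
          filter_upwards [hev (((d + 1) / (-m) : ℝ) : WithTop ℝ) (WithTop.coe_lt_top _)] with n hn
          exact_mod_cast hn
        obtain ⟨n, h1, h2⟩ := (h.and hev').exists
        have : d + 1 < γ n * (-m) := (div_lt_iff₀ (by linarith : (0:ℝ) < -m)).1 h2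
        nlinarith
      · obtain ⟨n, hn⟩ := h.exists
        right
        exact ⟨hm, by rw [hm] at hn; linarith⟩
      · exact Or.inl hm
    · rintro (hm | ⟨hm, hd⟩)
      · filter_upwards [hev (((-d) / m : ℝ) : WithTop ℝ) (WithTop.coe_lt_top _)] with n hn
        have h1 : (-d) / m < γ n := by exact_mod_cast hn
        have h2 : -d < γ n * m := (div_lt_iff₀ hm).1 h1
        nlinarith
      · exact Eventually.of_forall fun n => by rw [hm]; linarith
  | coe D =>
    have hltD : ∀ n, γ n < D := fun n => by exact_mod_cast hlt n
    rw [COND_coe]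
    constructor
    · intro h
      rcases lt_trichotomy (d + m * D) 0 with hc | hc | hc
      · exfalso
        set ε : ℝ := -(d + m * D) with hε
        have hε0 : 0 < ε := by rw [hε]; linarith
        have haD : (D - ε / (|m| + 1) : ℝ) < D := by
          have : 0 < ε / (|m| + 1) := div_pos hε0 (by positivity)
          linarith
        have hev' : ∀ᶠ n in atTop, (D - ε / (|m| + 1) : ℝ) < γ n := by
          filter_upwards [hev ((D - ε / (|m| + 1) : ℝ) : WithTop ℝ) (by exact_mod_cast haD)]
            with n hn
          exact_mod_cast hn
        obtain ⟨n, h1, h2⟩ := (h.and hev').exists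
        have h3 : D - γ n < ε / (|m| + 1) := by linarith
        have h4 : 0 ≤ D - γ n := by linarith [hltD n]
        have h5 : |m| * (D - γ n) ≤ |m| * (ε / (|m| + 1)) :=
          mul_le_mul_of_nonneg_left h3.le (abs_nonneg m)
        have h6 : |m| * (ε / (|m| + 1)) < ε := by
          rw [mul_div_assoc']
          rw [div_lt_iff₀ (by positivity : (0:ℝ) < |m| + 1)]
          have h8 : 0 ≤ |m| * ε := mul_nonneg (abs_nonneg m) hε0.le
          nlinarith
        have h7 : m * (γ n - D) ≤ |m| * (D - γ n) := by
          calc m * (γ n - D) ≤ |m * (γ n - D)| := le_abs_self _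
            _ = |m| * |γ n - D| := abs_mul _ _
            _ = |m| * (D - γ n) := by rw [abs_of_nonpos (show γ n - D ≤ 0 by linarith)]; ring_nf
        have h9 : m * (γ n - D) < ε := lt_of_le_of_lt (h7.trans h5) h6
        have hfin : d + m * γ n = (d + m * D) + m * (γ n - D) := by ring
        rw [hε] at h9
        linarith [hfin ▸ h1]
      · rcases le_or_gt m 0 with hm | hm
        · exact Or.inr ⟨hc, hm⟩
        · exfalso
          obtain ⟨n, hn⟩ := h.exists
          nlinarith [hltD n]
      · exact Or.inl hc
    · rintro (hc | ⟨hc, hm⟩)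
      · rcases le_or_gt m 0 with hm | hm
        · exact Eventually.of_forall fun n => by nlinarith [hltD n]
        · have hthm : ((-d) / m : ℝ) < D := by
            rw [div_lt_iff₀ hm]; nlinarith
          filter_upwards [hev (((-d) / m : ℝ) : WithTop ℝ) (by exact_mod_cast hthm)] with n hn
          have h1 : (-d) / m < γ n := by exact_mod_cast hn
          have h2 : -d < γ n * m := (div_lt_iff₀ hm).1 h1
          nlinarith
      · exact Eventually.of_forall fun n => by nlinarith [hltD n]


section PCLemmas

variable {F : Type*} [Field F] (w : AddValuation F (WithTop ℝ))

lemma exists_gamma {s : ℕ → F} (hs : IsPC w s) :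
    ∃ γ : ℕ → ℝ, StrictMono γ ∧ ∀ n, w (s (n+1) - s n) = (γ n : WithTop ℝ) := by
  have hne : ∀ n, w (s (n+1) - s n) ≠ ⊤ := fun n => (hs n).ne_top
  choose γ hγ using fun n => WithTop.ne_top_iff_exists.1 (hne n)
  refine ⟨γ, strictMono_nat_of_lt_succ (fun n => ?_), fun n => (hγ n).symm⟩
  have := hs n
  rw [← hγ n, ← hγ (n+1)] at this
  exact_mod_cast this

variable {s : ℕ → F} {γ : ℕ → ℝ} {δ : WithTop ℝ}

lemma gamma_lt (hb : IsBreadth w s δ) (hγ : ∀ n, w (s (n+1) - s n) = (γ n : WithTop ℝ))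
    (hm : StrictMono γ) : ∀ n, (γ n : WithTop ℝ) < δ := by
  intro n
  by_contra hcon
  push_neg at hcon
  have h2 : δ < ((γ (n+1) : ℝ) : WithTop ℝ) :=
    lt_of_le_of_lt hcon (by exact_mod_cast hm (Nat.lt_succ_self n))
  obtain ⟨N, hN⟩ := eventually_atTop.1 (hb.2 _ h2)
  have h3 := hN (max N (n+1)) (le_max_left _ _)
  simp only [hγ] at h3
  have h4 : γ (n+1) ≤ γ (max N (n+1)) := hm.monotone (le_max_right _ _)
  have h5 : γ (max N (n+1)) < γ (n+1) := by exact_mod_cast h3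
  linarith

lemma ev_gamma_gt (hb : IsBreadth w s δ) (hγ : ∀ n, w (s (n+1) - s n) = (γ n : WithTop ℝ))
    {a : WithTop ℝ} (ha : a < δ) : ∀ᶠ n in atTop, a < ((γ n : ℝ) : WithTop ℝ) := by
  filter_upwards [hb.1 a ha] with n hn
  rw [← hγ n]; exact hn

lemma vdiff (hγ : ∀ n, w (s (n+1) - s n) = (γ n : WithTop ℝ)) (hm : StrictMono γ) :
    ∀ n m, n < m → w (s m - s n) = (γ n : WithTop ℝ) := by
  intro n m hnm
  induction m with
  | zero => omega
  | succ m ih =>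
    rcases Nat.lt_succ_iff_lt_or_eq.1 hnm with h | h
    · have h1 : s (m+1) - s n = (s (m+1) - s m) + (s m - s n) := by ring
      rw [h1, AddValuation.map_add_eq_of_lt_right]
      · exact ih h
      · rw [hγ m, ih h]
        exact_mod_cast hm h
    · rw [← h]
      exact hγ n
lemma ge_breadth' {γ : ℕ → ℝ} {δ : WithTop ℝ}
    (hev : ∀ a : WithTop ℝ, a < δ → ∀ᶠ n in atTop, a < ((γ n : ℝ) : WithTop ℝ))
    {x : WithTop ℝ} (h : ∀ᶠ n in atTop, ((γ n : ℝ) : WithTop ℝ) ≤ x) : δ ≤ x := by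
  by_contra hlt
  push_neg at hlt
  obtain ⟨n, h1, h2⟩ := ((hev x hlt).and h).exists
  exact absurd (h1.trans_le h2) (lt_irrefl x)

lemma pc_injective (hγ : ∀ n, w (s (n+1) - s n) = (γ n : WithTop ℝ)) (hm : StrictMono γ) :
    Function.Injective s := by
  intro a b hab
  by_contra hne
  rcases lt_or_gt_of_ne hne with h | h
  · have := vdiff w hγ hm a b h
    rw [hab, sub_self, AddValuation.map_zero] at this
    exact WithTop.coe_ne_top this.symm
  · have := vdiff w hγ hm b a h
    rw [hab, sub_self, AddValuation.map_zero] at this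
    exact WithTop.coe_ne_top this.symm

lemma dichotomy (hγ : ∀ n, w (s (n+1) - s n) = (γ n : WithTop ℝ)) (hm : StrictMono γ) (α : F) :
    (∃ N lam, ∀ n ≥ N, lam < γ n ∧ w (s n - α) = ((lam : ℝ) : WithTop ℝ)) ∨
    (∀ n, w (s n - α) = ((γ n : ℝ) : WithTop ℝ)) := by
  by_cases h : ∃ n, w (s n - α) < ((γ n : ℝ) : WithTop ℝ)
  · left
    obtain ⟨n₀, hn₀⟩ := h
    obtain ⟨lam, hlam⟩ := WithTop.ne_top_iff_exists.1 hn₀.ne_top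
    refine ⟨n₀, lam, ?_⟩
    have key : ∀ k, w (s (n₀ + k) - α) = ((lam : ℝ) : WithTop ℝ) ∧ lam < γ (n₀ + k) := by
      intro k
      induction k with
      | zero =>
        refine ⟨hlam.symm, ?_⟩
        have := hn₀
        rw [← hlam] at this
        exact_mod_cast this
      | succ k ih =>
        have e1 : s (n₀+k+1) - α = (s (n₀+k+1) - s (n₀+k)) + (s (n₀+k) - α) := by ring
        have hval : w (s (n₀+k+1) - α) = ((lam : ℝ) : WithTop ℝ) := by
          rw [e1, AddValuation.map_add_eq_of_lt_right]
          · exact ih.1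
          · rw [ih.1, hγ]
            exact_mod_cast ih.2
        refine ⟨hval, lt_trans ih.2 (hm (Nat.lt_succ_self _))⟩
    intro n hn
    obtain ⟨k, rfl⟩ := Nat.exists_eq_add_of_le hn
    exact ⟨(key k).2, (key k).1⟩
  · right
    push_neg at h
    intro n
    have e1 : s n - α = (s n - s (n+1)) + (s (n+1) - α) := by ring
    rw [e1, AddValuation.map_add_eq_of_lt_left]
    · rw [AddValuation.map_sub_swap, hγ]
    · rw [AddValuation.map_sub_swap, hγ]
      calc ((γ n : ℝ) : WithTop ℝ) < ((γ (n+1) : ℝ) : WithTop ℝ) := by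
            exact_mod_cast hm (Nat.lt_succ_self n)
        _ ≤ w (s (n+1) - α) := h (n+1)

lemma w_multiset_prod (M : Multiset F) : w M.prod = (M.map (fun z => w z)).sum := by
  induction M using Multiset.induction_on with
  | empty => simp [AddValuation.map_one]
  | cons a M ih =>
    rw [Multiset.prod_cons, AddValuation.map_mul, ih, Multiset.map_cons, Multiset.sum_cons]

lemma eval_val {p : F[X]} (hp : p ≠ 0) (hsp : p.Splits) (z : F) :
    w (p.eval z) = w p.leadingCoeff + (p.roots.map (fun α => w (z - α))).sum := by
  conv_lhs => rw [hsp.eq_prod_roots]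
  rw [eval_mul, eval_C, AddValuation.map_mul, eval_multiset_prod, Multiset.map_map,
    w_multiset_prod, Multiset.map_map]
  congr 2
  apply Multiset.map_congr rfl
  intro α hα
  simp

lemma ms_sum {x : ℕ → F} {A B : F → ℝ} {g : ℕ → ℝ} {N : ℕ} (M : Multiset F)
    (h : ∀ α ∈ M, ∀ n ≥ N, w (x n - α) = ((A α + B α * g n : ℝ) : WithTop ℝ)) :
    ∀ n ≥ N, (M.map (fun α => w (x n - α))).sum
      = ((((M.map A).sum + (M.map B).sum * g n : ℝ)) : WithTop ℝ) := by
  induction M using Multiset.induction_on with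
  | empty => intro n hn; simp
  | cons a M ih =>
    intro n hn
    rw [Multiset.map_cons, Multiset.sum_cons, h a (Multiset.mem_cons_self a M) n hn,
      ih (fun α hα n hn => h α (Multiset.mem_cons_of_mem hα) n hn) n hn,
      ← WithTop.coe_add, Multiset.map_cons, Multiset.sum_cons, Multiset.map_cons,
      Multiset.sum_cons, WithTop.coe_inj]
    ring

end PCLemmas



section Star

variable {K : Type*} [Field K]

lemma zero_mem_VESet (v : AddValuation K (WithTop ℝ)) (s : ℕ → K) : (0 : RatFunc K) ∈ VESet v s := by
  show ∀ᶠ n in atTop, 0 ≤ v (RatFunc.eval (RingHom.id K) (s n) 0)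
  refine Eventually.of_forall fun n => ?_
  rw [RatFunc.eval_zero, AddValuation.map_zero]
  exact le_top

lemma eventually_poly_ne_zero {s : ℕ → K} (hinj : Function.Injective s) {p : K[X]}
    (hp : p ≠ 0) : ∀ᶠ n in atTop, p.eval (s n) ≠ 0 := by
  rw [← Nat.cofinite_eq_atTop, eventually_cofinite]
  have : {n | ¬ p.eval (s n) ≠ 0} = s ⁻¹' {x | p.IsRoot x} := by
    ext n; simp [Polynomial.IsRoot]
  rw [this]
  exact Set.Finite.preimage hinj.injOn (Polynomial.finite_setOf_isRoot hp)

lemma mem_VESet_iff_ev (v : AddValuation K (WithTop ℝ)) {φ : RatFunc K} {s : ℕ → K}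
    (hinj : Function.Injective s) {Fc Gc : ℕ → ℝ}
    (hF : ∀ᶠ n in atTop, v (φ.num.eval (s n)) = ((Fc n : ℝ) : WithTop ℝ))
    (hG : ∀ᶠ n in atTop, v (φ.denom.eval (s n)) = ((Gc n : ℝ) : WithTop ℝ)) :
    (φ ∈ VESet v s ↔ ∀ᶠ n in atTop, Gc n ≤ Fc n) := by
  have hden := eventually_poly_ne_zero hinj φ.denom_ne_zero
  show (∀ᶠ n in atTop, 0 ≤ v (RatFunc.eval (RingHom.id K) (s n) φ)) ↔ _
  apply eventually_congr
  filter_upwards [hF, hG, hden] with n hFn hGn hdn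
  have he : RatFunc.eval (RingHom.id K) (s n) φ = φ.num.eval (s n) / φ.denom.eval (s n) := by
    rw [RatFunc.eval]
    rfl
  have hmul : φ.num.eval (s n) = RatFunc.eval (RingHom.id K) (s n) φ * φ.denom.eval (s n) := by
    rw [he, div_mul_cancel₀ _ hdn]
  have hv : ((Fc n : ℝ) : WithTop ℝ) = v (RatFunc.eval (RingHom.id K) (s n) φ) + ((Gc n : ℝ) : WithTop ℝ) := by
    rw [← hFn, hmul, AddValuation.map_mul, hGn]
  exact zero_le_iff_of_coe_eq hv

/-- The key local-constancy statement: membership of `φ` in `V_F` is constant on a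
sufficiently small `d_δ`-ball around `V_E`. -/
lemma star (v : AddValuation K (WithTop ℝ)) {δ : WithTop ℝ} (φ : RatFunc K) {s : ℕ → K}
    (hs : IsPC v s) (hbs : IsBreadth v s δ) :
    ∃ ρ : ℝ, (ρ : WithTop ℝ) < δ ∧ ∀ t : ℕ → K, IsPC v t → IsBreadth v t δ →
      (∀ᶠ n in atTop, (ρ : WithTop ℝ) < v (s n - t n)) →
      (φ ∈ VESet v s ↔ φ ∈ VESet v t) := by
  classical
  obtain ⟨γ, hγm, hγ⟩ := exists_gamma v hs
  have hγlt : ∀ n, ((γ n : ℝ) : WithTop ℝ) < δ := gamma_lt v hbs hγ hγm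
  by_cases hφ : φ = 0
  · refine ⟨γ 0, hγlt 0, fun t _ _ _ => ?_⟩
    subst hφ
    exact iff_of_true (zero_mem_VESet v s) (zero_mem_VESet v t)
  have hf0 : φ.num ≠ 0 := RatFunc.num_ne_zero hφ
  have hg0 : φ.denom ≠ 0 := φ.denom_ne_zero
  set L := (φ.num * φ.denom).SplittingField with hL
  set ι : K →+* L := algebraMap K L with hι
  obtain ⟨u, hu⟩ := exists_ext (K := K) (L := L) v
  set a : ℕ → L := fun n => ι (s n) with ha
  have hus : ∀ x y : K, u (ι x - ι y) = v (x - y) := fun x y => by rw [← map_sub, hu]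
  have hγL : ∀ n, u (a (n+1) - a n) = ((γ n : ℝ) : WithTop ℝ) := fun n => by
    rw [ha]; simp only; rw [hus, hγ]
  set fh := φ.num.map ι with hfh
  set gh := φ.denom.map ι with hgh
  have hfh0 : fh ≠ 0 := (Polynomial.map_ne_zero_iff ι.injective).2 hf0
  have hgh0 : gh ≠ 0 := (Polynomial.map_ne_zero_iff ι.injective).2 hg0
  have hsplf : fh.Splits := (SplittingField.splits _).of_dvd
    ((Polynomial.map_ne_zero_iff ι.injective).2 (mul_ne_zero hf0 hg0))
    (Polynomial.map_dvd ι ⟨φ.denom, rfl⟩)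
  have hsplg : gh.Splits := (SplittingField.splits _).of_dvd
    ((Polynomial.map_ne_zero_iff ι.injective).2 (mul_ne_zero hf0 hg0))
      (Polynomial.map_dvd ι ⟨φ.num, mul_comm _ _⟩)
  have hevalf : ∀ (p : K[X]) (n : ℕ), v (p.eval (s n)) = u ((p.map ι).eval (a n)) := by
    intro p n
    rw [Polynomial.eval_map, Polynomial.eval₂_at_apply, hu]
  -- dichotomy data for all roots
  have hdich : ∀ α : L, ∃ (bb : Bool) (lam : ℝ) (Nd : ℕ),
      (bb = true → ∀ n ≥ Nd, lam < γ n ∧ u (a n - α) = ((lam : ℝ) : WithTop ℝ)) ∧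
      (bb = false → ∀ n, u (a n - α) = ((γ n : ℝ) : WithTop ℝ)) := by
    intro α
    rcases dichotomy u hγL hγm α with ⟨N, lam, h⟩ | h
    · exact ⟨true, lam, N, fun _ => h, fun hh => by simp at hh⟩
    · exact ⟨false, 0, 0, fun hh => by simp at hh, fun _ => h⟩
  choose bb lam Nd hbT hbF using hdich
  set A : L → ℝ := fun α => if bb α then lam α else 0 with hA
  set B : L → ℝ := fun α => if bb α then 0 else 1 with hB
  set M : Multiset L := fh.roots + gh.roots with hM
  set NE := M.toFinset.sup Nd with hNE
  have hAB : ∀ α ∈ M, ∀ n ≥ NE, u (a n - α) = ((A α + B α * γ n : ℝ) : WithTop ℝ) := by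
    intro α hα n hn
    have hNd : Nd α ≤ NE := Finset.le_sup (Multiset.mem_toFinset.2 hα)
    cases hb : bb α with
    | true =>
      have h := (hbT α hb n (le_trans hNd hn)).2
      rw [h, hA, hB]
      simp [hb]
    | false =>
      rw [hbF α hb n, hA, hB]
      simp [hb]
  obtain ⟨lf, hlf⟩ := WithTop.ne_top_iff_exists.1 (v_ne_top u (leadingCoeff_ne_zero.2 hfh0))
  obtain ⟨lg, hlg⟩ := WithTop.ne_top_iff_exists.1 (v_ne_top u (leadingCoeff_ne_zero.2 hgh0))
  set cf : ℝ := lf + (fh.roots.map A).sum with hcf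
  set ef : ℝ := (fh.roots.map B).sum with hef
  set cg : ℝ := lg + (gh.roots.map A).sum with hcg
  set eg : ℝ := (gh.roots.map B).sum with heg
  have hmemf : ∀ α ∈ fh.roots, α ∈ M := fun α hα => by
    rw [hM]; exact Multiset.mem_add.2 (Or.inl hα)
  have hmemg : ∀ α ∈ gh.roots, α ∈ M := fun α hα => by
    rw [hM]; exact Multiset.mem_add.2 (Or.inr hα)
  have hvf : ∀ n ≥ NE, v (φ.num.eval (s n)) = ((cf + ef * γ n : ℝ) : WithTop ℝ) := by
    intro n hn
    rw [hevalf, eval_val u hfh0 hsplf (a n),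
      ms_sum u fh.roots (fun α hα => hAB α (hmemf α hα)) n hn, ← hlf, ← WithTop.coe_add,
      WithTop.coe_inj, hcf, hef]
    ring
  have hvg : ∀ n ≥ NE, v (φ.denom.eval (s n)) = ((cg + eg * γ n : ℝ) : WithTop ℝ) := by
    intro n hn
    rw [hevalf, eval_val u hgh0 hsplg (a n),
      ms_sum u gh.roots (fun α hα => hAB α (hmemg α hα)) n hn, ← hlg, ← WithTop.coe_add,
      WithTop.coe_inj, hcg, heg]
    ring
  set d : ℝ := cf - cg with hd
  set m : ℝ := ef - eg with hm
  -- E-side membership criterion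
  have hinjs : Function.Injective s := pc_injective v hγ hγm
  have hmemE : φ ∈ VESet v s ↔ COND δ d m := by
    rw [mem_VESet_iff_ev v hinjs
      ((eventually_ge_atTop NE).mono (fun n hn => hvf n hn))
      ((eventually_ge_atTop NE).mono (fun n hn => hvg n hn))]
    rw [← crit hγlt (fun x hx => ev_gamma_gt v hbs hγ hx) d m]
    apply eventually_congr
    refine Eventually.of_forall fun n => ?_
    rw [hd, hm]
    constructor <;> intro <;> linarith
  -- choose ρ
  obtain ⟨θ, hθδ, hθ⟩ := exists_theta' δ d m ⟨γ 0, hγlt 0⟩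
  set SS : Finset ℝ := insert θ (insert (γ 0) ((M.toFinset.filter (fun α => bb α)).image lam))
    with hSS
  have hSSne : SS.Nonempty := ⟨θ, by simp [hSS]⟩
  set ρ := SS.max' hSSne with hρ
  have hSSlt : ∀ y ∈ SS, (y : WithTop ℝ) < δ := by
    intro y hy
    rw [hSS] at hy
    simp only [Finset.mem_insert, Finset.mem_image, Finset.mem_filter] at hy
    rcases hy with rfl | rfl | ⟨α, ⟨hαM, hαb⟩, rfl⟩
    · exact hθδ
    · exact hγlt 0
    · have h1 := (hbT α (by simpa using hαb) (Nd α) le_rfl).1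
      exact lt_trans (by exact_mod_cast h1) (hγlt (Nd α))
  have hρδ : (ρ : WithTop ℝ) < δ := by
    induction δ using WithTop.recTopCoe with
    | top => exact WithTop.coe_lt_top _
    | coe D =>
      rw [WithTop.coe_lt_coe, hρ, Finset.max'_lt_iff]
      intro y hy
      exact_mod_cast hSSlt y hy
  have hθρ : θ ≤ ρ := Finset.le_max' _ _ (by simp [hSS])
  have hlamρ : ∀ α ∈ M, bb α = true → lam α ≤ ρ := by
    intro α hα hb
    apply Finset.le_max'
    rw [hSS]
    simp only [Finset.mem_insert, Finset.mem_image, Finset.mem_filter]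
    exact Or.inr (Or.inr ⟨α, ⟨Multiset.mem_toFinset.2 hα, by simp [hb]⟩, rfl⟩)
  refine ⟨ρ, hρδ, ?_⟩
  intro t hpt hbt hclose
  obtain ⟨γ', hγ'm, hγ'⟩ := exists_gamma v hpt
  have hγ'lt : ∀ n, ((γ' n : ℝ) : WithTop ℝ) < δ := gamma_lt v hbt hγ' hγ'm
  have hinjt : Function.Injective t := pc_injective v hγ' hγ'm
  set c : ℕ → L := fun n => ι (t n) with hc
  have hγ'L : ∀ n, u (c (n+1) - c n) = ((γ' n : ℝ) : WithTop ℝ) := fun n => by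
    rw [hc]; simp only; rw [hus, hγ']
  have hevalft : ∀ (p : K[X]) (n : ℕ), v (p.eval (t n)) = u ((p.map ι).eval (c n)) := by
    intro p n
    rw [Polynomial.eval_map, Polynomial.eval₂_at_apply, hu]
  have hcloseL : ∀ᶠ n in atTop, (ρ : WithTop ℝ) < u (a n - c n) := by
    filter_upwards [hclose] with n h
    rw [ha, hc]; simp only; rw [hus]; exact h
  -- stabilized roots stay stabilized with the same value
  have hstabF : ∀ α ∈ M, bb α = true →
      ∀ᶠ n in atTop, u (c n - α) = ((lam α : ℝ) : WithTop ℝ) := by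
    intro α hα hb
    filter_upwards [hcloseL, eventually_ge_atTop (Nd α)] with n h1 h2
    have h3 := hbT α hb n h2
    have e1 : c n - α = (c n - a n) + (a n - α) := by ring
    rw [e1, AddValuation.map_add_eq_of_lt_right]
    · exact h3.2
    · rw [h3.2, AddValuation.map_sub_swap]
      refine lt_of_le_of_lt ?_ h1
      exact_mod_cast hlamρ α hα hb
  by_cases hcase : ∀ α ∈ M, bb α = false → (∀ n, u (c n - α) = ((γ' n : ℝ) : WithTop ℝ))
  · -- Case A : all breadth roots stay breadth-type for t
    have hAB' : ∀ α ∈ M, ∀ᶠ n in atTop, u (c n - α) = ((A α + B α * γ' n : ℝ) : WithTop ℝ) := by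
      intro α hα
      cases hb : bb α with
      | true =>
        filter_upwards [hstabF α hα hb] with n hn
        rw [hn, hA, hB]; simp [hb]
      | false =>
        refine Eventually.of_forall fun n => ?_
        rw [hcase α hα hb n, hA, hB]; simp [hb]
    have hall : ∀ᶠ n in atTop, ∀ α ∈ M.toFinset, u (c n - α)
        = ((A α + B α * γ' n : ℝ) : WithTop ℝ) :=
      (Finset.eventually_all M.toFinset).2 (fun α hα => hAB' α (Multiset.mem_toFinset.1 hα))
    obtain ⟨NF, hNF⟩ := eventually_atTop.1 hall
    have hABt : ∀ α ∈ M, ∀ n ≥ NF, u (c n - α) = ((A α + B α * γ' n : ℝ) : WithTop ℝ) :=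
      fun α hα n hn => hNF n hn α (Multiset.mem_toFinset.2 hα)
    have hvf' : ∀ n ≥ NF, v (φ.num.eval (t n)) = ((cf + ef * γ' n : ℝ) : WithTop ℝ) := by
      intro n hn
      rw [hevalft, eval_val u hfh0 hsplf (c n),
        ms_sum u fh.roots (fun α hα => hABt α (hmemf α hα)) n hn, ← hlf, ← WithTop.coe_add,
        WithTop.coe_inj, hcf, hef]
      ring
    have hvg' : ∀ n ≥ NF, v (φ.denom.eval (t n)) = ((cg + eg * γ' n : ℝ) : WithTop ℝ) := by
      intro n hn
      rw [hevalft, eval_val u hgh0 hsplg (c n),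
        ms_sum u gh.roots (fun α hα => hABt α (hmemg α hα)) n hn, ← hlg, ← WithTop.coe_add,
        WithTop.coe_inj, hcg, heg]
      ring
    have hmemF : φ ∈ VESet v t ↔ COND δ d m := by
      rw [mem_VESet_iff_ev v hinjt
        ((eventually_ge_atTop NF).mono (fun n hn => hvf' n hn))
        ((eventually_ge_atTop NF).mono (fun n hn => hvg' n hn))]
      rw [← crit hγ'lt (fun x hx => ev_gamma_gt v hbt hγ' hx) d m]
      apply eventually_congr
      refine Eventually.of_forall fun n => ?_
      rw [hd, hm]
      constructor <;> intro <;> linarith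
    rw [hmemE, hmemF]
  · -- Case B : some breadth root stabilizes for t at a common value μ
    push_neg at hcase
    obtain ⟨α₀, hα₀M, hα₀b, hα₀n⟩ := hcase
    have hdF := dichotomy u hγ'L hγ'm α₀
    rcases hdF with ⟨N₀, μ, hμdata⟩ | hbr
    swap
    · obtain ⟨n, hne⟩ := hα₀n
      exact absurd (hbr n) hne
    -- (ii) μ < δ
    have hμδ : ((μ : ℝ) : WithTop ℝ) < δ :=
      lt_trans (by exact_mod_cast (hμdata N₀ le_rfl).1) (hγ'lt N₀)
    -- (i) ρ < μ
    have hρμ : ρ < μ := by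
      have hγgtρ : ∀ᶠ n in atTop, (ρ : WithTop ℝ) < ((γ n : ℝ) : WithTop ℝ) :=
        ev_gamma_gt v hbs hγ hρδ
      obtain ⟨n, ⟨hn1, hn2⟩, hn3⟩ := ((hcloseL.and hγgtρ).and (eventually_ge_atTop N₀)).exists
      have h4 : (ρ : WithTop ℝ) < u (c n - α₀) := by
        have e1 : c n - α₀ = (c n - a n) + (a n - α₀) := by ring
        rw [e1]
        apply AddValuation.map_lt_add
        · rwa [AddValuation.map_sub_swap]
        · rw [hbF α₀ hα₀b n]; exact hn2
      rw [(hμdata n hn3).2] at h4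
      exact_mod_cast h4
    -- (iii) all breadth roots stabilize at μ for t
    have hbrF : ∀ β ∈ M, bb β = false → ∀ᶠ n in atTop, u (c n - β) = ((μ : ℝ) : WithTop ℝ) := by
      intro β hβ hβb
      have hge : δ ≤ u (α₀ - β) := by
        apply ge_breadth' (fun x hx => ev_gamma_gt v hbs hγ hx)
        refine Eventually.of_forall fun n => ?_
        have e1 : α₀ - β = (α₀ - a n) + (a n - β) := by ring
        rw [e1]
        apply AddValuation.map_le_add
        · rw [AddValuation.map_sub_swap, hbF α₀ hα₀b n]
        · rw [hbF β hβb n]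
      filter_upwards [eventually_ge_atTop N₀] with n hn
      have e1 : c n - β = (c n - α₀) + (α₀ - β) := by ring
      rw [e1, AddValuation.map_add_eq_of_lt_left]
      · exact (hμdata n hn).2
      · rw [(hμdata n hn).2]
        exact lt_of_lt_of_le hμδ hge
    set A' : L → ℝ := fun α => if bb α then lam α else μ with hA'
    have hAB' : ∀ α ∈ M, ∀ᶠ n in atTop,
        u (c n - α) = ((A' α + (fun _ : L => (0:ℝ)) α * γ' n : ℝ) : WithTop ℝ) := by
      intro α hα
      cases hb : bb α with
      | true =>
        filter_upwards [hstabF α hα hb] with n hn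
        rw [hn, hA']; simp [hb]
      | false =>
        filter_upwards [hbrF α hα hb] with n hn
        rw [hn, hA']; simp [hb]
    have hall : ∀ᶠ n in atTop, ∀ α ∈ M.toFinset, u (c n - α)
        = ((A' α + (fun _ : L => (0:ℝ)) α * γ' n : ℝ) : WithTop ℝ) :=
      (Finset.eventually_all M.toFinset).2 (fun α hα => hAB' α (Multiset.mem_toFinset.1 hα))
    obtain ⟨NF, hNF⟩ := eventually_atTop.1 hall
    have hABt : ∀ α ∈ M, ∀ n ≥ NF, u (c n - α)
        = ((A' α + (fun _ : L => (0:ℝ)) α * γ' n : ℝ) : WithTop ℝ) :=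
      fun α hα n hn => hNF n hn α (Multiset.mem_toFinset.2 hα)
    have hsumA' : ∀ R : Multiset L, (∀ α ∈ R, α ∈ M) →
        (R.map A').sum = (R.map A).sum + (R.map B).sum * μ := by
      intro R hR
      have h1 : (R.map A').sum = (R.map (fun α => A α + B α * μ)).sum := by
        congr 1
        apply Multiset.map_congr rfl
        intro α hα
        rw [hA', hA, hB]
        cases hb : bb α <;> simp [hb]
      rw [h1, Multiset.sum_map_add, Multiset.sum_map_mul_right]
    have hvf' : ∀ n ≥ NF, v (φ.num.eval (t n))
        = (((cf + ef * μ) + 0 * γ' n : ℝ) : WithTop ℝ) := by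
      intro n hn
      rw [hevalft, eval_val u hfh0 hsplf (c n),
        ms_sum u fh.roots (fun α hα => hABt α (hmemf α hα)) n hn, ← hlf, ← WithTop.coe_add,
        WithTop.coe_inj, hsumA' fh.roots hmemf, hcf, hef]
      have : (fh.roots.map (fun _ : L => (0:ℝ))).sum = 0 := by
        simp
      rw [this]
      ring
    have hvg' : ∀ n ≥ NF, v (φ.denom.eval (t n))
        = (((cg + eg * μ) + 0 * γ' n : ℝ) : WithTop ℝ) := by
      intro n hn
      rw [hevalft, eval_val u hgh0 hsplg (c n),
        ms_sum u gh.roots (fun α hα => hABt α (hmemg α hα)) n hn, ← hlg, ← WithTop.coe_add,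
        WithTop.coe_inj, hsumA' gh.roots hmemg, hcg, heg]
      have : (gh.roots.map (fun _ : L => (0:ℝ))).sum = 0 := by
        simp
      rw [this]
      ring
    have hmemF : φ ∈ VESet v t ↔ 0 ≤ d + m * μ := by
      rw [mem_VESet_iff_ev v hinjt
        ((eventually_ge_atTop NF).mono (fun n hn => hvf' n hn))
        ((eventually_ge_atTop NF).mono (fun n hn => hvg' n hn))]
      constructor
      · intro h
        obtain ⟨n, hn⟩ := h.exists
        rw [hd, hm]
        linarith
      · intro h
        rw [hd, hm] at h
        exact Eventually.of_forall fun n => by linarith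
    rw [hmemE, hmemF, hθ μ (lt_of_le_of_lt hθρ hρμ) hμδ]

end Star


section TopoAux

variable {K : Type*} [Field K]

lemma dK_ultra (v : AddValuation K (WithTop ℝ)) (x y z : K) :
    dK v x z ≤ max (dK v x y) (dK v y z) := by
  have h1 : min (v (x - y)) (v (y - z)) ≤ v (x - z) := by
    have e : x - z = (x - y) + (y - z) := by ring
    rw [e]; exact AddValuation.map_add v _ _
  rcases le_total (v (x - y)) (v (y - z)) with h | h
  · rw [min_eq_left h] at h1
    exact le_max_of_le_left (expNeg_anti h1)
  · rw [min_eq_right h] at h1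
    exact le_max_of_le_right (expNeg_anti h1)

lemma tendsto_expNeg_gamma {γ : ℕ → ℝ} {δ : WithTop ℝ}
    (hlt : ∀ n, ((γ n : ℝ) : WithTop ℝ) < δ)
    (hev : ∀ a : WithTop ℝ, a < δ → ∀ᶠ n in atTop, a < ((γ n : ℝ) : WithTop ℝ)) :
    Tendsto (fun n => expNeg ((γ n : ℝ) : WithTop ℝ)) atTop (𝓝 (expNeg δ)) := by
  induction δ using WithTop.recTopCoe with
  | top =>
    have hγtop : Tendsto γ atTop atTop :=
      tendsto_atTop.2 (fun b => by
        filter_upwards [hev (b : WithTop ℝ) (WithTop.coe_lt_top _)] with n hn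
        exact (show b < γ n by exact_mod_cast hn).le)
    have h2 := Real.tendsto_exp_neg_atTop_nhds_zero.comp hγtop
    show Tendsto (fun n => expNeg ((γ n : ℝ) : WithTop ℝ)) atTop (𝓝 (expNeg (⊤ : WithTop ℝ)))
    rw [expNeg_top]
    exact h2
  | coe D =>
    have h1 : Tendsto γ atTop (𝓝 D) := by
      rw [tendsto_order]
      constructor
      · intro a ha
        filter_upwards [hev (a : WithTop ℝ) (by exact_mod_cast ha)] with n hn
        exact_mod_cast hn
      · intro b hb
        exact Eventually.of_forall fun n =>
          lt_trans (show γ n < D by exact_mod_cast hlt n) hb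
    have h2 : Tendsto (fun n => Real.exp (-γ n)) atTop (𝓝 (Real.exp (-D))) :=
      (Real.continuous_exp.tendsto _).comp h1.neg
    simpa [expNeg_coe] using h2

end TopoAux

/-- On `𝒱(•,δ)`, the Zariski topology, the constructible topology and
the metric topology induced by `d_δ` coincide. -/
theorem statement3 (v : AddValuation K (WithTop ℝ)) (hv : IsRankOne v)
    (δ : WithTop ℝ)
    (dd : ValuationSubring (RatFunc K) → ValuationSubring (RatFunc K) → ℝ)
    (hdd : IsDistδ v δ dd) :
    zarSub (VVδ v δ) = consSub (VVδ v δ) ∧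
    zarSub (VVδ v δ) = generateFrom
      {U : Set ↥(VVδ v δ) | ∃ (W : ↥(VVδ v δ)) (ε : ℝ), 0 < ε ∧
        U = {W' : ↥(VVδ v δ) |
          dd (W : ValuationSubring (RatFunc K)) (W' : ValuationSubring (RatFunc K)) < ε}} := by
  classical
  set S : Set (ValuationSubring (RatFunc K)) := VVδ v δ with hSdef
  have hrep : ∀ W : ↥S, ∃ s : ℕ → K, IsPC v s ∧ IsBreadth v s δ ∧
      ((W : ValuationSubring (RatFunc K)) : Set (RatFunc K)) = VESet v s := fun W => W.2
  choose sq hPC hBr hCar using hrep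
  have hmem : ∀ (W : ↥S) (φ : RatFunc K),
      φ ∈ (W : ValuationSubring (RatFunc K)) ↔ φ ∈ VESet v (sq W) := by
    intro W φ
    rw [← SetLike.mem_coe, hCar W]
  have hgam : ∀ W : ↥S, ∃ γ : ℕ → ℝ, StrictMono γ ∧
      ∀ n, v (sq W (n+1) - sq W n) = ((γ n : ℝ) : WithTop ℝ) := fun W => exists_gamma v (hPC W)
  choose gam hgamM hgamE using hgam
  have hgamlt : ∀ (W : ↥S) (n : ℕ), ((gam W n : ℝ) : WithTop ℝ) < δ :=
    fun W => gamma_lt v (hBr W) (hgamE W) (hgamM W)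
  have hgamev : ∀ (W : ↥S) (x : WithTop ℝ), x < δ →
      ∀ᶠ n in atTop, x < ((gam W n : ℝ) : WithTop ℝ) :=
    fun W x hx => ev_gamma_gt v (hBr W) (hgamE W) hx
  have hT : ∀ W W' : ↥S, Tendsto (fun n => max (dK v (sq W n) (sq W' n) - expNeg δ) 0) atTop
      (𝓝 (dd (W : ValuationSubring (RatFunc K)) (W' : ValuationSubring (RatFunc K)))) :=
    fun W W' => hdd _ _ _ _ (hPC W) (hBr W) (hCar W) (hPC W') (hBr W') (hCar W')
  have hT1 : ∀ (W W' : ↥S) (r : ℝ), ((r:ℝ) : WithTop ℝ) < δ →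
      (∀ᶠ n in atTop, ((r : ℝ) : WithTop ℝ) ≤ v (sq W n - sq W' n)) →
      dd W.1 W'.1 ≤ expNeg ((r:ℝ) : WithTop ℝ) - expNeg δ := by
    intro W W' r hrδ hev
    apply le_of_tendsto (hT W W')
    filter_upwards [hev] with n hn
    apply max_le
    · have h1 : dK v (sq W n) (sq W' n) ≤ expNeg ((r:ℝ):WithTop ℝ) := expNeg_anti hn
      linarith
    · have h2 := expNeg_anti hrδ.le
      linarith
  have hT2 : ∀ (W W' : ↥S) (r : ℝ),
      (∃ᶠ n in atTop, v (sq W n - sq W' n) ≤ ((r : ℝ) : WithTop ℝ)) →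
      expNeg ((r:ℝ) : WithTop ℝ) - expNeg δ ≤ dd W.1 W'.1 := by
    intro W W' r hfreq
    have hmem' : dd W.1 W'.1 ∈ Ici (expNeg ((r:ℝ):WithTop ℝ) - expNeg δ) := by
      apply IsClosed.mem_of_frequently_of_tendsto isClosed_Ici ?_ (hT W W')
      apply hfreq.mono
      intro n hn
      have h1 : expNeg ((r:ℝ):WithTop ℝ) ≤ dK v (sq W n) (sq W' n) := expNeg_anti hn
      simp only [mem_Ici]
      calc expNeg ((r:ℝ):WithTop ℝ) - expNeg δ
            ≤ dK v (sq W n) (sq W' n) - expNeg δ := by linarith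
        _ ≤ max (dK v (sq W n) (sq W' n) - expNeg δ) 0 := le_max_left _ _
    exact hmem'
  have hT0 : ∀ W W' : ↥S, 0 ≤ dd W.1 W'.1 := fun W W' =>
    ge_of_tendsto (hT W W') (Eventually.of_forall fun n => le_max_right _ _)
  have hT3 : ∀ W W' W'' : ↥S, dd W.1 W''.1 ≤ max (dd W.1 W'.1) (dd W'.1 W''.1) := by
    intro W W' W''
    apply le_of_tendsto_of_tendsto' (hT W W'') ((hT W W').max (hT W' W''))
    intro n
    have hu := dK_ultra v (sq W n) (sq W' n) (sq W'' n)
    apply max_le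
    · rcases le_max_iff.1 hu with h | h
      · apply le_max_of_le_left
        calc dK v (sq W n) (sq W'' n) - expNeg δ
            ≤ dK v (sq W n) (sq W' n) - expNeg δ := by linarith
          _ ≤ max (dK v (sq W n) (sq W' n) - expNeg δ) 0 := le_max_left _ _
      · apply le_max_of_le_right
        calc dK v (sq W n) (sq W'' n) - expNeg δ
            ≤ dK v (sq W' n) (sq W'' n) - expNeg δ := by linarith
          _ ≤ max (dK v (sq W' n) (sq W'' n) - expNeg δ) 0 := le_max_left _ _
    · exact le_max_of_le_left (le_max_right _ _)
  have hball : ∀ (W W' : ↥S) (ρ : ℝ), dd W.1 W'.1 < expNeg ((ρ:ℝ):WithTop ℝ) - expNeg δ →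
      ∀ᶠ n in atTop, ((ρ:ℝ):WithTop ℝ) < v (sq W n - sq W' n) := by
    intro W W' ρ h
    by_contra hcon
    rw [not_eventually] at hcon
    have h2 : ∃ᶠ n in atTop, v (sq W n - sq W' n) ≤ ((ρ:ℝ):WithTop ℝ) :=
      hcon.mono (fun n hn => not_lt.1 hn)
    exact absurd h (not_lt.2 (hT2 W W' ρ h2))
  set tball : TopologicalSpace ↥S := generateFrom
      {U : Set ↥S | ∃ (W : ↥S) (ε : ℝ), 0 < ε ∧
        U = {W' : ↥S |
          dd (W : ValuationSubring (RatFunc K)) (W' : ValuationSubring (RatFunc K)) < ε}}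
    with htball
  -- (C) cons ≤ zar
  have hCle : consSub S ≤ zarSub S := by
    letI := consSub S
    unfold zarSub zarTop
    rw [induced_generateFrom_eq]
    apply le_generateFrom
    rintro U ⟨U', ⟨φ, rfl⟩, rfl⟩
    have hU : IsOpen[consTop (RatFunc K)] {W : ValuationSubring (RatFunc K) | φ ∈ W} := by
      have he : {W : ValuationSubring (RatFunc K) | φ ∈ W}
          = {W : ValuationSubring (RatFunc K) | ∀ ψ ∈ ({φ} : Finset (RatFunc K)), ψ ∈ W} := by
        ext W; simp
      rw [he]
      exact isOpen_generateFrom_of_mem ⟨{φ}, Or.inl rfl⟩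
    exact @isOpen_induced _ _ (consTop (RatFunc K)) Subtype.val _ hU
  -- common clopen fact
  have key : ∀ (φ : RatFunc K) (W₀ : ↥S), ∃ ε : ℝ, 0 < ε ∧ ∀ W' : ↥S,
      dd W₀.1 W'.1 < ε → (φ ∈ W'.1 ↔ φ ∈ W₀.1) := by
    intro φ W₀
    obtain ⟨ρ, hρδ, hρ⟩ := star v φ (hPC W₀) (hBr W₀)
    refine ⟨expNeg ((ρ:ℝ):WithTop ℝ) - expNeg δ, by have := expNeg_lt hρδ; linarith, ?_⟩
    intro W' hW'
    have hev := hball W₀ W' ρ hW'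
    have hiff := hρ (sq W') (hPC W') (hBr W') hev
    rw [hmem W' φ, hmem W₀ φ]
    exact hiff.symm
  have hclopen : ∀ φ : RatFunc K,
      IsOpen[tball] (Subtype.val ⁻¹' {W : ValuationSubring (RatFunc K) | φ ∈ W}) ∧
      IsOpen[tball] (Subtype.val ⁻¹' {W : ValuationSubring (RatFunc K) | φ ∈ W})ᶜ := by
    intro φ
    constructor
    · letI := tball
      rw [isOpen_iff_forall_mem_open]
      intro W₀ hW₀
      obtain ⟨ε, hε, hloc⟩ := key φ W₀
      refine ⟨{W' : ↥S | dd W₀.1 W'.1 < ε}, ?_, ?_, ?_⟩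
      · intro W' hW'
        have := (hloc W' hW').2 hW₀
        exact this
      · exact isOpen_generateFrom_of_mem ⟨W₀, ε, hε, rfl⟩
      · show dd W₀.1 W₀.1 < ε
        have h0 : Tendsto (fun n => max (dK v (sq W₀ n) (sq W₀ n) - expNeg δ) 0) atTop
            (𝓝 (dd W₀.1 W₀.1)) := hT W₀ W₀
        have h1 : ∀ n, max (dK v (sq W₀ n) (sq W₀ n) - expNeg δ) 0 = max (- expNeg δ) 0 := by
          intro n
          have : dK v (sq W₀ n) (sq W₀ n) = 0 := by
            show expNeg (v (sq W₀ n - sq W₀ n)) = 0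
            rw [sub_self, AddValuation.map_zero, expNeg_top]
          rw [this]; ring_nf
        have h2 : dd W₀.1 W₀.1 = max (- expNeg δ) 0 :=
          tendsto_nhds_unique h0 (by simp only [h1]; exact tendsto_const_nhds)
        rw [h2]
        have := expNeg_nonneg δ
        rw [max_eq_right (by linarith)]
        exact hε
    · letI := tball
      rw [isOpen_iff_forall_mem_open]
      intro W₀ hW₀
      obtain ⟨ε, hε, hloc⟩ := key φ W₀
      refine ⟨{W' : ↥S | dd W₀.1 W'.1 < ε}, ?_, ?_, ?_⟩
      · intro W' hW'
        simp only [mem_compl_iff, mem_preimage, mem_setOf_eq] at hW₀ ⊢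
        intro hmem'
        exact hW₀ ((hloc W' hW').1 hmem')
      · exact isOpen_generateFrom_of_mem ⟨W₀, ε, hε, rfl⟩
      · show dd W₀.1 W₀.1 < ε
        have h0 : Tendsto (fun n => max (dK v (sq W₀ n) (sq W₀ n) - expNeg δ) 0) atTop
            (𝓝 (dd W₀.1 W₀.1)) := hT W₀ W₀
        have h1 : ∀ n, max (dK v (sq W₀ n) (sq W₀ n) - expNeg δ) 0 = max (- expNeg δ) 0 := by
          intro n
          have : dK v (sq W₀ n) (sq W₀ n) = 0 := by
            show expNeg (v (sq W₀ n - sq W₀ n)) = 0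
            rw [sub_self, AddValuation.map_zero, expNeg_top]
          rw [this]; ring_nf
        have h2 : dd W₀.1 W₀.1 = max (- expNeg δ) 0 :=
          tendsto_nhds_unique h0 (by simp only [h1]; exact tendsto_const_nhds)
        rw [h2]
        have := expNeg_nonneg δ
        rw [max_eq_right (by linarith)]
        exact hε
  -- (B) tball ≤ cons
  have hBle : tball ≤ consSub S := by
    letI := tball
    unfold consSub consTop
    rw [induced_generateFrom_eq]
    apply le_generateFrom
    rintro U ⟨U', ⟨T, hT'⟩, rfl⟩
    rcases hT' with rfl | rfl
    · have he : (Subtype.val : ↥S → ValuationSubring (RatFunc K)) ⁻¹'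
            {W : ValuationSubring (RatFunc K) | ∀ φ ∈ T, φ ∈ W}
          = ⋂ φ ∈ T, (Subtype.val : ↥S → ValuationSubring (RatFunc K)) ⁻¹'
            {W : ValuationSubring (RatFunc K) | φ ∈ W} := by
        ext W; simp
      rw [he]
      exact isOpen_biInter_finset (fun φ _ => (hclopen φ).1)
    · have he : (Subtype.val : ↥S → ValuationSubring (RatFunc K)) ⁻¹'
            ({W : ValuationSubring (RatFunc K) | ∀ φ ∈ T, φ ∈ W}ᶜ)
          = ⋃ φ ∈ T, ((Subtype.val : ↥S → ValuationSubring (RatFunc K)) ⁻¹'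
            {W : ValuationSubring (RatFunc K) | φ ∈ W})ᶜ := by
        ext W
        simp [not_forall]
      rw [he]
      exact isOpen_biUnion (fun φ _ => (hclopen φ).2)
  -- (A) zar ≤ tball
  have hAle : zarSub S ≤ tball := by
    letI := zarSub S
    rw [htball]
    apply le_generateFrom
    rintro U ⟨W₀, ε, hε, rfl⟩
    rw [isOpen_iff_forall_mem_open]
    intro W' hW'
    have hW'lt : dd W₀.1 W'.1 < ε := hW'
    have hεd : 0 < ε - dd W₀.1 W'.1 := by linarith
    have htnd := tendsto_expNeg_gamma (hgamlt W') (hgamev W')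
    have h0 : Tendsto (fun n => expNeg ((gam W' n:ℝ):WithTop ℝ) - expNeg δ) atTop (𝓝 0) := by
      have := htnd.sub_const (expNeg δ)
      simpa using this
    have hevsmall : ∀ᶠ n in atTop,
        expNeg ((gam W' n : ℝ):WithTop ℝ) - expNeg δ < ε - dd W₀.1 W'.1 :=
      h0.eventually_lt_const hεd
    obtain ⟨M, hM⟩ := hevsmall.exists
    set ψp : Polynomial K :=
      Polynomial.C ((sq W' (M+1) - sq W' M)⁻¹) * (Polynomial.X - Polynomial.C (sq W' M))
      with hψp
    set ψ : RatFunc K := algebraMap (Polynomial K) (RatFunc K) ψp with hψ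
    have hcM : v (sq W' (M+1) - sq W' M) = ((gam W' M : ℝ) : WithTop ℝ) := hgamE W' M
    have hψeval : ∀ x : K, RatFunc.eval (RingHom.id K) x ψ
        = (sq W' (M+1) - sq W' M)⁻¹ * (x - sq W' M) := by
      intro x
      rw [hψ, RatFunc.eval_algebraMap]
      have : (algebraMap (Polynomial K) (Polynomial K)) ψp = ψp := rfl
      rw [this]
      show ψp.eval x = _
      rw [hψp]
      simp [eval_mul, eval_C, eval_sub, eval_X]
    have hψval : ∀ x : K, v (RatFunc.eval (RingHom.id K) x ψ)
        = ((-(gam W' M) : ℝ) : WithTop ℝ) + v (x - sq W' M) := by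
      intro x
      rw [hψeval, AddValuation.map_mul, v_coe_inv v hcM]
    have hψmem : ∀ W'' : ↥S, (ψ ∈ W''.1 ↔
        ∀ᶠ n in atTop, ((gam W' M : ℝ) : WithTop ℝ) ≤ v (sq W'' n - sq W' M)) := by
      intro W''
      rw [hmem W'' ψ]
      show (∀ᶠ n in atTop, 0 ≤ v (RatFunc.eval (RingHom.id K) (sq W'' n) ψ)) ↔ _
      apply eventually_congr
      refine Eventually.of_forall fun n => ?_
      rw [hψval]
      exact zero_le_neg_add_iff
    refine ⟨Subtype.val ⁻¹' {W : ValuationSubring (RatFunc K) | ψ ∈ W}, ?_, ?_, ?_⟩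
    · -- inclusion into the ball
      intro W'' hW''
      have hev := (hψmem W'').1 hW''
      have hev2 : ∀ᶠ n in atTop, ((gam W' M : ℝ) : WithTop ℝ) ≤ v (sq W' n - sq W'' n) := by
        filter_upwards [hev, eventually_ge_atTop (M+1)] with n h1 h2
        have h3 : v (sq W' n - sq W' M) = ((gam W' M : ℝ) : WithTop ℝ) :=
          vdiff v (hgamE W') (hgamM W') M n (by omega)
        have e : sq W' n - sq W'' n = (sq W' n - sq W' M) + (sq W' M - sq W'' n) := by ring
        rw [e]
        apply AddValuation.map_le_add
        · rw [h3]
        · rw [AddValuation.map_sub_swap]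
          exact h1
      have hd1 : dd W'.1 W''.1 ≤ expNeg ((gam W' M : ℝ) : WithTop ℝ) - expNeg δ :=
        hT1 W' W'' (gam W' M) (hgamlt W' M) hev2
      have hd2 : dd W₀.1 W''.1 < ε := by
        have h4 := hT3 W₀ W' W''
        have h5 : dd W'.1 W''.1 < ε - dd W₀.1 W'.1 := lt_of_le_of_lt hd1 hM
        have h6 := hT0 W₀ W'
        rcases max_cases (dd W₀.1 W'.1) (dd W'.1 W''.1) with ⟨he, _⟩ | ⟨he, _⟩ <;>
          rw [he] at h4 <;> linarith
      exact hd2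
    · exact @isOpen_induced _ _ (zarTop (RatFunc K)) Subtype.val _
        (isOpen_generateFrom_of_mem ⟨ψ, rfl⟩)
    · -- W' itself is in it
      show ψ ∈ W'.1
      rw [hψmem W']
      filter_upwards [eventually_ge_atTop (M+1)] with n hn
      rw [vdiff v (hgamE W') (hgamM W') M n (by omega)]
  constructor
  · exact le_antisymm (le_trans hAle hBle) hCle
  · exact le_antisymm hAle (le_trans hBle hCle)

end PaperPCZar
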